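/- arXiv:2602.03862 — 4 statements merged into one kernel-verified Lean document; each statement's English description precedes it below -/
import Mathlib

section
/- Let H be a finite simple graph whose vertices all have degree in {2,3,4}, such that: every 2-vertex has two 4-neighbors; every 4-vertex has at most one 2-neighbor; 3-vertices are partitioned by number of 4-neighbors into classes 3(A) (three 4-neighbors), 3(B) (two), 3(C) (one), 3(D) (none); every 3(D)-vertex adjacent to a 3(D)-vertex is adjacent to two 3(B)-vertices; a 3(C)-vertex is called weak if both its 3-neighbors are 3(D)-vertices, strong if at least one 3-neighbor is a 3(B)-vertex, moderate otherwise; every 3(D)-vertex has at most one weak 3(C)-neighbor; and whenever a 3(D)-vertex is adjacent to three 3(C)-vertices one of which is weak, the other two are strong. Then the average degree of H is at least 34/11, i.e. 2|E(H)| ≥ (34/11)|V(H)|. -/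
open SimpleGraph

variable {V : Type*}

/-- Two edges are at distance at most 2 (they "see" each other): distinct and
some endpoint of one equals or is adjacent to some endpoint of the other. -/
def EdgeSees (G : SimpleGraph V) (e e' : Sym2 V) : Prop :=
  e ≠ e' ∧ ∃ a ∈ e, ∃ b ∈ e', a = b ∨ G.Adj a b

/-- `G` admits a strong `N`-edge-coloring. -/
def HasStrongColoring (G : SimpleGraph V) (N : ℕ) : Prop :=
  ∃ f : G.edgeSet → Fin N, ∀ e e' : G.edgeSet, EdgeSees G e.val e'.val → f e ≠ f e'

/-- `G − v`: delete the vertex `v` (remove all edges incident to it). -/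
def DelV (G : SimpleGraph V) (v : V) : SimpleGraph V where
  Adj a b := G.Adj a b ∧ a ≠ v ∧ b ≠ v
  symm := ⟨fun _ _ h => ⟨h.1.symm, h.2.2, h.2.1⟩⟩
  loopless := ⟨fun a h => G.loopless.irrefl a h.1⟩

/-- Number of 4-neighbors of a vertex. -/
noncomputable def n4 [Fintype V] (H : SimpleGraph V) [DecidableRel H.Adj] (x : V) : ℕ :=
  {y | H.Adj x y ∧ H.degree y = 4}.ncard

/-- 3(B)-vertex: 3-vertex with exactly two 4-neighbors. -/
def Is3B [Fintype V] (H : SimpleGraph V) [DecidableRel H.Adj] (x : V) : Prop :=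
  H.degree x = 3 ∧ n4 H x = 2

/-- 3(C)-vertex: 3-vertex with exactly one 4-neighbor. -/
def Is3C [Fintype V] (H : SimpleGraph V) [DecidableRel H.Adj] (x : V) : Prop :=
  H.degree x = 3 ∧ n4 H x = 1

/-- 3(D)-vertex: 3-vertex with no 4-neighbor. -/
def Is3D [Fintype V] (H : SimpleGraph V) [DecidableRel H.Adj] (x : V) : Prop :=
  H.degree x = 3 ∧ n4 H x = 0

/-- Weak 3(C)-vertex: both its 3-neighbors are 3(D)-vertices. -/
def IsWeak3C [Fintype V] (H : SimpleGraph V) [DecidableRel H.Adj] (x : V) : Prop :=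
  Is3C H x ∧ ∀ y, H.Adj x y → H.degree y = 3 → Is3D H y

/-- Strong 3(C)-vertex: at least one 3-neighbor is a 3(B)-vertex. -/
def IsStrong3C [Fintype V] (H : SimpleGraph V) [DecidableRel H.Adj] (x : V) : Prop :=
  Is3C H x ∧ ∃ y, H.Adj x y ∧ Is3B H y

-- auxiliary development, to be spliced into proof.lean
section Discharge

variable [Fintype V] (H : SimpleGraph V) [DecidableRel H.Adj]

open Classical in
/-- Transfer function for discharging: `tr H x y` is the charge sent from `x` to `y`. -/
noncomputable def tr (x y : V) : ℚ :=
  if H.Adj x y then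
    if H.degree x = 4 then
      (if H.degree y = 2 then 18/33 else if Is3C H y then 4/33
        else if H.degree y = 3 then 3/33 else 0)
    else if Is3B H x then (if H.degree y = 3 then 3/33 else 0)
    else if IsStrong3C H x then (if Is3D H y then 3/33 else 0)
    else if Is3C H x ∧ ¬ IsWeak3C H x then (if Is3D H y then 1/33 else 0)
    else 0
  else 0

lemma tr_nonneg (x y : V) : 0 ≤ tr H x y := by
  unfold tr; split_ifs <;> norm_num

lemma tr_not_adj {x y : V} (h : ¬ H.Adj x y) : tr H x y = 0 := by
  unfold tr; rw [if_neg h]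

lemma setcard (x : V) (p : V → Prop) [DecidablePred p] :
    {y | H.Adj x y ∧ p y}.ncard = ((H.neighborFinset x).filter p).card := by
  have : {y | H.Adj x y ∧ p y} = ↑((H.neighborFinset x).filter p) := by
    ext y; simp [SimpleGraph.mem_neighborFinset]
  rw [this, Set.ncard_coe_finset]

lemma n4_eq (x : V) :
    n4 H x = ((H.neighborFinset x).filter (fun y => H.degree y = 4)).card :=
  setcard H x _

lemma sum_lb {N S : Finset V} (hsub : S ⊆ N) {f : V → ℚ} {c : ℚ}
    (hc : ∀ u ∈ S, c ≤ f u) (h0 : ∀ u ∈ N, 0 ≤ f u) :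
    (S.card : ℚ) * c ≤ ∑ u ∈ N, f u := by
  calc (S.card : ℚ) * c = ∑ _u ∈ S, c := by rw [Finset.sum_const, nsmul_eq_mul]
  _ ≤ ∑ u ∈ S, f u := Finset.sum_le_sum hc
  _ ≤ ∑ u ∈ N, f u := Finset.sum_le_sum_of_subset_of_nonneg hsub (fun u hu _ => h0 u hu)

lemma sum_ite_card {N : Finset V} {f : V → ℚ} {p : V → Prop} [DecidablePred p] {c : ℚ}
    (h : ∀ u ∈ N, f u = if p u then c else 0) :
    ∑ u ∈ N, f u = ((N.filter p).card : ℚ) * c := by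
  rw [Finset.sum_congr rfl h, Finset.sum_ite, Finset.sum_const, Finset.sum_const]
  simp [nsmul_eq_mul]

end Discharge


section Key
variable [Fintype V] {H : SimpleGraph V} [DecidableRel H.Adj]

open Classical in
lemma part3 (h1 : ∀ x, H.degree x = 2 ∨ H.degree x = 3 ∨ H.degree x = 4)
    (h2 : ∀ x y, H.degree x = 2 → H.Adj x y → H.degree y = 4)
    {v : V} (hv : H.degree v = 3) :
    ((H.neighborFinset v).filter (fun y => H.degree y = 3)).card + n4 H v = 3 := by
  rw [n4_eq]
  have heq : (H.neighborFinset v).filter (fun y => ¬ H.degree y = 3)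
      = (H.neighborFinset v).filter (fun y => H.degree y = 4) := by
    apply Finset.filter_congr
    intro y hy
    have hadj : H.Adj v y := (H.mem_neighborFinset v y).1 hy
    have h2' : H.degree y ≠ 2 := fun hd => by
      have := h2 y v hd hadj.symm; omega
    rcases h1 y with h | h | h <;> simp [h] <;> omega
  rw [← heq, Finset.card_filter_add_card_filter_not,
    H.card_neighborFinset_eq_degree, hv]

open Classical in
lemma key (h1 : ∀ x, H.degree x = 2 ∨ H.degree x = 3 ∨ H.degree x = 4)
    (h2 : ∀ x y, H.degree x = 2 → H.Adj x y → H.degree y = 4)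
    (h3 : ∀ x, H.degree x = 4 → {y | H.Adj x y ∧ H.degree y = 2}.ncard ≤ 1)
    (h4 : ∀ x y, Is3D H x → H.Adj x y → Is3D H y →
        {z | H.Adj x z ∧ Is3B H z}.ncard = 2)
    (h5 : ∀ x, Is3D H x → {y | H.Adj x y ∧ IsWeak3C H y}.ncard ≤ 1)
    (h6 : ∀ x, Is3D H x → (∀ y, H.Adj x y → Is3C H y) →
        ∀ y, H.Adj x y → IsWeak3C H y →
          ∀ z, H.Adj x z → z ≠ y → IsStrong3C H z)
    (v : V) :
    (34/11 : ℚ) ≤ (H.degree v : ℚ) + (∑ u, tr H u v) - ∑ u, tr H v u := by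
  set N := H.neighborFinset v with hNdef
  have hmem : ∀ u, u ∈ N ↔ H.Adj v u := fun u => H.mem_neighborFinset v u
  have hin : ∑ u, tr H u v = ∑ u ∈ N, tr H u v :=
    (Finset.sum_subset (Finset.subset_univ N)
      (fun u _ hu => tr_not_adj H (fun ha => hu ((hmem u).2 ha.symm)))).symm
  have hout : ∑ u, tr H v u = ∑ u ∈ N, tr H v u :=
    (Finset.sum_subset (Finset.subset_univ N)
      (fun u _ hu => tr_not_adj H (fun ha => hu ((hmem u).2 ha)))).symm
  rw [hin, hout]
  have hcard : N.card = H.degree v := H.card_neighborFinset_eq_degree v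
  rcases h1 v with hv | hv | hv
  · -- degree 2
    have hall : ∀ u ∈ N, tr H u v = 18/33 := by
      intro u hu
      have hadj : H.Adj v u := (hmem u).1 hu
      have hu4 : H.degree u = 4 := h2 v u hv hadj
      simp [tr, hadj.symm, hu4, hv]
    have hout0 : ∀ u ∈ N, tr H v u = 0 := by
      intro u _
      have e1 : ¬ H.degree v = 4 := by omega
      have e2 : ¬ Is3B H v := fun h => by have := h.1; omega
      have e3 : ¬ IsStrong3C H v := fun h => by have := h.1.1; omega
      have e4 : ¬ (Is3C H v ∧ ¬ IsWeak3C H v) := fun h => by have := h.1.1; omega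
      simp [tr, e1, e2, e3, e4]
    rw [Finset.sum_congr rfl hall, Finset.sum_congr rfl hout0, Finset.sum_const,
      Finset.sum_const, hcard, hv]
    norm_num
  · -- degree 3
    have hno2 : ∀ u ∈ N, H.degree u ≠ 2 := by
      intro u hu hd
      have hadj : H.Adj v u := (hmem u).1 hu
      have := h2 u v hd hadj.symm; omega
    have hN3 : ∀ u ∈ N, H.degree u = 3 ∨ H.degree u = 4 := by
      intro u hu
      have := hno2 u hu
      rcases h1 u with h | h | h <;> omega
    have hpart : (N.filter (fun y => H.degree y = 3)).card + n4 H v = 3 :=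
      part3 h1 h2 hv
    set N3 := N.filter (fun y => H.degree y = 3) with hN3def
    set N4 := N.filter (fun y => H.degree y = 4) with hN4def
    have hn4card : N4.card = n4 H v := (n4_eq H v).symm
    have hN4mem : ∀ u ∈ N4, H.Adj v u ∧ H.degree u = 4 := by
      intro u hu
      rw [hN4def, Finset.mem_filter] at hu
      exact ⟨(hmem u).1 hu.1, hu.2⟩
    have hn4le : n4 H v ≤ 3 := by omega
    -- case on n4 v
    have hcases : n4 H v = 0 ∨ n4 H v = 1 ∨ n4 H v = 2 ∨ n4 H v = 3 := by omega
    rcases hcases with hn | hn | hn | hn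
    · -- 3(D)
      have hD : Is3D H v := ⟨hv, hn⟩
      have hall3 : ∀ u ∈ N, H.degree u = 3 := by
        intro u hu
        rcases hN3 u hu with h | h
        · exact h
        · exfalso
          have : u ∈ N4 := by rw [hN4def, Finset.mem_filter]; exact ⟨hu, h⟩
          have : N4.card ≠ 0 := Finset.card_ne_zero_of_mem this
          omega
      have hout0 : ∀ u ∈ N, tr H v u = 0 := by
        intro u _
        have e1 : ¬ H.degree v = 4 := by omega
        have e2 : ¬ Is3B H v := fun h => by have := h.2; omega
        have e3 : ¬ IsStrong3C H v := fun h => by have := h.1.2; omega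
        have e4 : ¬ (Is3C H v ∧ ¬ IsWeak3C H v) := fun h => by have := h.1.2; omega
        simp [tr, e1, e2, e3, e4]
      rw [Finset.sum_congr rfl hout0, Finset.sum_const, smul_zero]
      have hinlb : (3/33 : ℚ) ≤ ∑ u ∈ N, tr H u v := by
        by_cases hd : ∃ u ∈ N, Is3D H u
        · obtain ⟨u, hu, huD⟩ := hd
          have hB2 : {z | H.Adj v z ∧ Is3B H z}.ncard = 2 := h4 v u hD ((hmem u).1 hu) huD
          rw [setcard] at hB2
          have := sum_lb (Finset.filter_subset (fun z => Is3B H z) N)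
            (f := fun u => tr H u v) (c := 3/33)
            (fun z hz => by
              beta_reduce
              rw [Finset.mem_filter] at hz
              have hadj : H.Adj v z := (hmem z).1 hz.1
              have hzB := hz.2
              have hz3 : H.degree z = 3 := hzB.1
              have e1 : ¬ H.degree z = 4 := by omega
              unfold tr; rw [ if_pos hadj.symm, if_neg e1, if_pos hzB, if_pos hv])
            (fun u _ => tr_nonneg H u v)
          rw [hB2] at this
          calc (3/33 : ℚ) ≤ (2 : ℚ) * (3/33) := by norm_num
          _ ≤ _ := by exact_mod_cast this
        · by_cases hb : ∃ u ∈ N, Is3B H u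
          · obtain ⟨u, hu, huB⟩ := hb
            have hadj : H.Adj v u := (hmem u).1 hu
            have e1 : ¬ H.degree u = 4 := by have := huB.1; omega
            have hval : tr H u v = 3/33 := by
              unfold tr; rw [ if_pos hadj.symm, if_neg e1, if_pos huB, if_pos hv]
            have := sum_lb (Finset.singleton_subset_iff.2 hu)
              (f := fun u => tr H u v) (c := 3/33)
              (fun z hz => by beta_reduce; rw [Finset.mem_singleton] at hz; rw [hz, hval])
              (fun u _ => tr_nonneg H u v)
            simpa using this
          · have hallC : ∀ u ∈ N, Is3C H u := by
              intro u hu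
              have hu3 : H.degree u = 3 := hall3 u hu
              have hadj : H.Adj v u := (hmem u).1 hu
              have hpu := part3 h1 h2 hu3
              have hn40 : n4 H u ≠ 0 := fun h => hd ⟨u, hu, hu3, h⟩
              have hn42 : n4 H u ≠ 2 := fun h => hb ⟨u, hu, hu3, h⟩
              have hn43 : n4 H u ≠ 3 := by
                intro h
                have hcu : (H.neighborFinset u).card = 3 := by
                  rw [H.card_neighborFinset_eq_degree u, hu3]
                have hfc : ((H.neighborFinset u).filter (fun y => H.degree y = 4)).card
                    = (H.neighborFinset u).card := by rw [← n4_eq, h, hcu]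
                have heq := Finset.eq_of_subset_of_card_le
                  (Finset.filter_subset (fun y => H.degree y = 4) (H.neighborFinset u))
                  (le_of_eq hfc.symm)
                have hvmem : v ∈ H.neighborFinset u := (H.mem_neighborFinset u v).2 hadj.symm
                rw [← heq, Finset.mem_filter] at hvmem
                omega
              exact ⟨hu3, by omega⟩
            by_cases hw : ∃ u ∈ N, IsWeak3C H u
            · obtain ⟨u0, hu0, hu0W⟩ := hw
              have hstr := h6 v hD (fun y hy => hallC y ((hmem y).2 hy)) u0 ((hmem u0).1 hu0) hu0W
              have hcard2 : (N.erase u0).card = 2 := by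
                rw [Finset.card_erase_of_mem hu0, hcard, hv]
              have := sum_lb (Finset.erase_subset u0 N)
                (f := fun u => tr H u v) (c := 3/33)
                (fun z hz => by
                  beta_reduce
                  have hzmem := Finset.mem_of_mem_erase hz
                  have hzne := Finset.ne_of_mem_erase hz
                  have hadj : H.Adj v z := (hmem z).1 hzmem
                  have hzS : IsStrong3C H z := hstr z hadj hzne
                  have hz3 : H.degree z = 3 := hzS.1.1
                  have e1 : ¬ H.degree z = 4 := by omega
                  have e2 : ¬ Is3B H z := fun h => by
                    have := h.2; have := hzS.1.2; omega
                  unfold tr; rw [ if_pos hadj.symm, if_neg e1, if_neg e2, if_pos hzS, if_pos hD])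
                (fun u _ => tr_nonneg H u v)
              rw [hcard2] at this
              calc (3/33 : ℚ) ≤ (2 : ℚ) * (3/33) := by norm_num
              _ ≤ _ := by exact_mod_cast this
            · have := sum_lb (le_refl N)
                (f := fun u => tr H u v) (c := 1/33)
                (fun z hz => by
                  beta_reduce
                  have hadj : H.Adj v z := (hmem z).1 hz
                  have hzC := hallC z hz
                  have hz3 : H.degree z = 3 := hzC.1
                  have e1 : ¬ H.degree z = 4 := by omega
                  have e2 : ¬ Is3B H z := fun h => by
                    have := h.2; have := hzC.2; omega
                  have e4 : ¬ IsWeak3C H z := fun h => hw ⟨z, hz, h⟩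
                  by_cases e3 : IsStrong3C H z
                  · unfold tr; rw [ if_pos hadj.symm, if_neg e1, if_neg e2, if_pos e3, if_pos hD]
                    norm_num
                  · unfold tr; rw [ if_pos hadj.symm, if_neg e1, if_neg e2, if_neg e3,
                      if_pos ⟨hzC, e4⟩, if_pos hD])
                (fun u _ => tr_nonneg H u v)
              rw [hcard, hv] at this
              calc (3/33 : ℚ) = (3 : ℚ) * (1/33) := by norm_num
              _ ≤ _ := by exact_mod_cast this
      rw [hv]
      push_cast
      linarith
    · -- 3(C)
      have hC : Is3C H v := ⟨hv, hn⟩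
      have hc3 : N3.card = 2 := by omega
      have hin4 : (4/33 : ℚ) ≤ ∑ u ∈ N, tr H u v := by
        have := sum_lb (Finset.filter_subset (fun y => H.degree y = 4) N)
          (f := fun u => tr H u v) (c := 4/33)
          (fun z hz => by
            beta_reduce
            rw [Finset.mem_filter] at hz
            have hadj : H.Adj v z := (hmem z).1 hz.1
            have hz4 := hz.2
            have e2 : ¬ H.degree v = 2 := by omega
            unfold tr; rw [ if_pos hadj.symm, if_pos hz4, if_neg e2, if_pos hC])
          (fun u _ => tr_nonneg H u v)
        rw [← hN4def, hn4card, hn] at this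
        calc (4/33 : ℚ) = (1 : ℚ) * (4/33) := by norm_num
        _ ≤ _ := by exact_mod_cast this
      by_cases hW : IsWeak3C H v
      · have hout0 : ∀ u ∈ N, tr H v u = 0 := by
          intro u _
          have e1 : ¬ H.degree v = 4 := by omega
          have e2 : ¬ Is3B H v := fun h => by have := h.2; omega
          have e3 : ¬ IsStrong3C H v := fun h => by
            obtain ⟨y, hy, hyB⟩ := h.2
            have := (hW.2 y hy hyB.1).2
            have := hyB.2
            omega
          have e4 : ¬ (Is3C H v ∧ ¬ IsWeak3C H v) := fun h => h.2 hW
          simp [tr, e1, e2, e3, e4]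
        rw [Finset.sum_congr rfl hout0, Finset.sum_const, smul_zero, hv]
        push_cast
        linarith
      · by_cases hS : IsStrong3C H v
        · -- strong
          set SB := N.filter (fun y => Is3B H y) with hSBdef
          set SD := N.filter (fun y => Is3D H y) with hSDdef
          have e1 : ¬ H.degree v = 4 := by omega
          have e2 : ¬ Is3B H v := fun h => by have := h.2; omega
          have houtval : ∀ u ∈ N, tr H v u = if Is3D H u then 3/33 else 0 := by
            intro u hu
            have hadj : H.Adj v u := (hmem u).1 hu
            unfold tr; rw [ if_pos hadj, if_neg e1, if_neg e2, if_pos hS]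
          rw [sum_ite_card houtval, ← hSDdef]
          -- lower bound on in-sum over N4 ∪ SB
          have hdisj : Disjoint N4 SB := by
            rw [Finset.disjoint_left]
            intro a ha hb
            rw [hN4def, Finset.mem_filter] at ha
            rw [hSBdef, Finset.mem_filter] at hb
            have := hb.2.1; omega
          have hsub : N4 ∪ SB ⊆ N := by
            apply Finset.union_subset <;> [exact Finset.filter_subset _ _;
              exact Finset.filter_subset _ _]
          have hinlb := sum_lb hsub
            (f := fun u => tr H u v) (c := 3/33)
            (fun z hz => by
              beta_reduce
              rw [Finset.mem_union] at hz
              rcases hz with hz | hz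
              · rw [hN4def, Finset.mem_filter] at hz
                have hadj : H.Adj v z := (hmem z).1 hz.1
                have e2' : ¬ H.degree v = 2 := by omega
                unfold tr; rw [ if_pos hadj.symm, if_pos hz.2, if_neg e2', if_pos hC]
                norm_num
              · rw [hSBdef, Finset.mem_filter] at hz
                have hadj : H.Adj v z := (hmem z).1 hz.1
                have hzB := hz.2
                have e1' : ¬ H.degree z = 4 := by have := hzB.1; omega
                unfold tr; rw [ if_pos hadj.symm, if_neg e1', if_pos hzB, if_pos hv])
            (fun u _ => tr_nonneg H u v)
          rw [Finset.card_union_of_disjoint hdisj, hn4card, hn] at hinlb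
          -- SB.card ≥ 1
          have hSB1 : 1 ≤ SB.card := by
            obtain ⟨y, hy, hyB⟩ := hS.2
            have : y ∈ SB := by
              rw [hSBdef, Finset.mem_filter]
              exact ⟨(hmem y).2 hy, hyB⟩
            exact Finset.card_pos.2 ⟨y, this⟩
          -- SB.card + SD.card ≤ 2
          have hBD : SB.card + SD.card ≤ 2 := by
            have hdisj2 : Disjoint SB SD := by
              rw [Finset.disjoint_left]
              intro a ha hb
              rw [hSBdef, Finset.mem_filter] at ha
              rw [hSDdef, Finset.mem_filter] at hb
              have := ha.2.2; have := hb.2.2; omega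
            have hsub2 : SB ∪ SD ⊆ N3 := by
              rw [hN3def]
              apply Finset.union_subset
              · intro a ha
                rw [hSBdef, Finset.mem_filter] at ha
                rw [Finset.mem_filter]
                exact ⟨ha.1, ha.2.1⟩
              · intro a ha
                rw [hSDdef, Finset.mem_filter] at ha
                rw [Finset.mem_filter]
                exact ⟨ha.1, ha.2.1⟩
            have := Finset.card_le_card hsub2
            rw [Finset.card_union_of_disjoint hdisj2] at this
            omega
          have hDleB : SD.card ≤ SB.card := by omega
          rw [hv]
          have hcast : (SD.card : ℚ) ≤ (SB.card : ℚ) := by exact_mod_cast hDleB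
          push_cast at hinlb ⊢
          linarith
        · -- moderate
          set SD := N.filter (fun y => Is3D H y) with hSDdef
          have e1 : ¬ H.degree v = 4 := by omega
          have e2 : ¬ Is3B H v := fun h => by have := h.2; omega
          have houtval : ∀ u ∈ N, tr H v u = if Is3D H u then 1/33 else 0 := by
            intro u hu
            have hadj : H.Adj v u := (hmem u).1 hu
            unfold tr; rw [ if_pos hadj, if_neg e1, if_neg e2, if_neg hS, if_pos ⟨hC, hW⟩]
          rw [sum_ite_card houtval, ← hSDdef]
          have hSD1 : SD.card ≤ 1 := by
            -- since not weak, some 3-neighbor is not 3D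
            have : ¬ ∀ y, H.Adj v y → H.degree y = 3 → Is3D H y := fun h => hW ⟨hC, h⟩
            push_neg at this
            obtain ⟨y, hy, hy3, hyD⟩ := this
            have hymem : y ∈ N3 := by
              rw [hN3def, Finset.mem_filter]
              exact ⟨(hmem y).2 hy, hy3⟩
            have hsub : SD ⊆ N3.erase y := by
              intro a ha
              rw [hSDdef, Finset.mem_filter] at ha
              rw [Finset.mem_erase]
              refine ⟨fun h => hyD (h ▸ ha.2), ?_⟩
              rw [hN3def, Finset.mem_filter]
              exact ⟨ha.1, ha.2.1⟩
            have := Finset.card_le_card hsub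
            rw [Finset.card_erase_of_mem hymem, hc3] at this
            omega
          have hcast : (SD.card : ℚ) ≤ 1 := by exact_mod_cast hSD1
          rw [hv]
          push_cast
          linarith
    · -- 3(B)
      have hB : Is3B H v := ⟨hv, hn⟩
      have hc3 : N3.card = 1 := by omega
      have e1 : ¬ H.degree v = 4 := by omega
      have houtval : ∀ u ∈ N, tr H v u = if H.degree u = 3 then 3/33 else 0 := by
        intro u hu
        have hadj : H.Adj v u := (hmem u).1 hu
        unfold tr; rw [ if_pos hadj, if_neg e1, if_pos hB]
      rw [sum_ite_card houtval, ← hN3def, hc3]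
      have hinlb := sum_lb (Finset.filter_subset (fun y => H.degree y = 4) N)
        (f := fun u => tr H u v) (c := 3/33)
        (fun z hz => by
          beta_reduce
          rw [Finset.mem_filter] at hz
          have hadj : H.Adj v z := (hmem z).1 hz.1
          have e2' : ¬ H.degree v = 2 := by omega
          have e3' : ¬ Is3C H v := fun h => by have := h.2; omega
          unfold tr; rw [ if_pos hadj.symm, if_pos hz.2, if_neg e2', if_neg e3', if_pos hv])
        (fun u _ => tr_nonneg H u v)
      rw [← hN4def, hn4card, hn] at hinlb
      rw [hv]
      push_cast at hinlb ⊢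
      linarith
    · -- 3(A)
      have hout0 : ∀ u ∈ N, tr H v u = 0 := by
        intro u _
        have e1 : ¬ H.degree v = 4 := by omega
        have e2 : ¬ Is3B H v := fun h => by have := h.2; omega
        have e3 : ¬ IsStrong3C H v := fun h => by have := h.1.2; omega
        have e4 : ¬ (Is3C H v ∧ ¬ IsWeak3C H v) := fun h => by have := h.1.2; omega
        simp [tr, e1, e2, e3, e4]
      rw [Finset.sum_congr rfl hout0, Finset.sum_const, smul_zero]
      have hinlb := sum_lb (Finset.filter_subset (fun y => H.degree y = 4) N)
        (f := fun u => tr H u v) (c := 3/33)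
        (fun z hz => by
          beta_reduce
          rw [Finset.mem_filter] at hz
          have hadj : H.Adj v z := (hmem z).1 hz.1
          have e2' : ¬ H.degree v = 2 := by omega
          have e3' : ¬ Is3C H v := fun h => by have := h.2; omega
          unfold tr; rw [ if_pos hadj.symm, if_pos hz.2, if_neg e2', if_neg e3', if_pos hv])
        (fun u _ => tr_nonneg H u v)
      rw [← hN4def, hn4card, hn] at hinlb
      rw [hv]
      push_cast at hinlb ⊢
      linarith
  · -- degree 4
    have hinlb : (0 : ℚ) ≤ ∑ u ∈ N, tr H u v :=
      Finset.sum_nonneg (fun u _ => tr_nonneg H u v)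
    have houtub : ∀ u ∈ N, tr H v u ≤ if H.degree u = 2 then (18/33 : ℚ) else 4/33 := by
      intro u hu
      have hadj : H.Adj v u := (hmem u).1 hu
      unfold tr; rw [ if_pos hadj, if_pos hv]
      split_ifs <;> norm_num
    have hsum_ub : ∑ u ∈ N, tr H v u
        ≤ ((N.filter (fun u => H.degree u = 2)).card : ℚ) * (18/33)
          + ((N.filter (fun u => ¬ H.degree u = 2)).card : ℚ) * (4/33) := by
      calc ∑ u ∈ N, tr H v u ≤ ∑ u ∈ N, (if H.degree u = 2 then (18/33 : ℚ) else 4/33) :=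
        Finset.sum_le_sum houtub
      _ = _ := by
        rw [Finset.sum_ite, Finset.sum_const, Finset.sum_const]
        simp [nsmul_eq_mul]
    have hc2 : (N.filter (fun u => H.degree u = 2)).card ≤ 1 := by
      have := h3 v hv
      rw [setcard] at this
      exact this
    have hcsum : (N.filter (fun u => H.degree u = 2)).card
        + (N.filter (fun u => ¬ H.degree u = 2)).card = 4 := by
      rw [Finset.card_filter_add_card_filter_not, hcard, hv]
    have hc2' : ((N.filter (fun u => H.degree u = 2)).card : ℚ) ≤ 1 := by exact_mod_cast hc2
    have hcsum' : ((N.filter (fun u => H.degree u = 2)).card : ℚ)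
        + ((N.filter (fun u => ¬ H.degree u = 2)).card : ℚ) = 4 := by exact_mod_cast hcsum
    rw [hv]
    push_cast
    linarith

end Key


/-- Discharging step for Theorem 1: the structural conditions force
average degree at least 34/11. -/
theorem stmt12 [Fintype V] (H : SimpleGraph V) [DecidableRel H.Adj]
    (h1 : ∀ x, H.degree x = 2 ∨ H.degree x = 3 ∨ H.degree x = 4)
    (h2 : ∀ x y, H.degree x = 2 → H.Adj x y → H.degree y = 4)
    (h3 : ∀ x, H.degree x = 4 → {y | H.Adj x y ∧ H.degree y = 2}.ncard ≤ 1)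
    (h4 : ∀ x y, Is3D H x → H.Adj x y → Is3D H y →
        {z | H.Adj x z ∧ Is3B H z}.ncard = 2)
    (h5 : ∀ x, Is3D H x → {y | H.Adj x y ∧ IsWeak3C H y}.ncard ≤ 1)
    (h6 : ∀ x, Is3D H x → (∀ y, H.Adj x y → Is3C H y) →
        ∀ y, H.Adj x y → IsWeak3C H y →
          ∀ z, H.Adj x z → z ≠ y → IsStrong3C H z) :
    (34 / 11 : ℚ) * Fintype.card V ≤ 2 * H.edgeSet.ncard := by
  classical
  have hkey := key h1 h2 h3 h4 h5 h6
  have hsum : ∑ v, ((H.degree v : ℚ) + (∑ u, tr H u v) - ∑ u, tr H v u)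
      = ∑ v, (H.degree v : ℚ) := by
    rw [Finset.sum_sub_distrib, Finset.sum_add_distrib, Finset.sum_comm]
    ring
  have hncard : H.edgeSet.ncard = H.edgeFinset.card := by
    rw [← Set.ncard_coe_finset, SimpleGraph.coe_edgeFinset]
  have h2E : ∑ v, (H.degree v : ℚ) = 2 * H.edgeSet.ncard := by
    rw [hncard]
    calc ∑ v, (H.degree v : ℚ) = ((∑ v, H.degree v : ℕ) : ℚ) := by push_cast; rfl
    _ = 2 * H.edgeFinset.card := by
        rw [H.sum_degrees_eq_twice_card_edges]; push_cast; ring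
  calc (34 / 11 : ℚ) * Fintype.card V = ∑ _v : V, (34/11 : ℚ) := by
        rw [Finset.sum_const, nsmul_eq_mul, Finset.card_univ, mul_comm]
  _ ≤ ∑ v, ((H.degree v : ℚ) + (∑ u, tr H u v) - ∑ u, tr H v u) :=
        Finset.sum_le_sum (fun v _ => hkey v)
  _ = 2 * H.edgeSet.ncard := by rw [hsum, h2E]
end

section
/- Let S₁,…,S_n be finite sets of colors with |S_i| ≥ n − 1 for all i, and suppose there exist indices a ≠ b with S_a ∩ S_b = ∅. Then the family (S₁,…,S_n) has a system of distinct representatives. -/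
/-- Hall-type lemma: n finite sets each of size ≥ n − 1, two of which are
disjoint, admit a system of distinct representatives. -/
theorem stmt14 {α : Type*} [DecidableEq α] (n : ℕ) (S : Fin n → Finset α)
    (hcard : ∀ i, n - 1 ≤ (S i).card) (a b : Fin n) (hab : a ≠ b)
    (hdisj : Disjoint (S a) (S b)) :
    ∃ c : Fin n → α, Function.Injective c ∧ ∀ i, c i ∈ S i := by
  rw [← Finset.all_card_le_biUnion_card_iff_existsInjective']
  intro J
  rcases J.eq_empty_or_nonempty with h | ⟨j, hj⟩
  · simp [h]
  by_cases hJ : J.card ≤ n - 1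
  · calc J.card ≤ n - 1 := hJ
      _ ≤ (S j).card := hcard j
      _ ≤ (J.biUnion S).card := Finset.card_le_card (Finset.subset_biUnion_of_mem S hj)
  · -- J.card = n, so a, b ∈ J
    have hn2 : 2 ≤ n := by
      by_contra h2
      have ha' := a.2
      have hb' := b.2
      exact hab (Fin.ext (by omega))
    have hJcard : J.card = n := by
      have := Finset.card_le_card (Finset.subset_univ J)
      simp only [Finset.card_univ, Fintype.card_fin] at this
      omega
    have hJu : J = Finset.univ := Finset.eq_univ_of_card J (by simpa using hJcard)
    have hsub : S a ∪ S b ⊆ J.biUnion S := by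
      rw [hJu]
      intro x hx
      rcases Finset.mem_union.mp hx with h | h
      · exact Finset.mem_biUnion.mpr ⟨a, Finset.mem_univ a, h⟩
      · exact Finset.mem_biUnion.mpr ⟨b, Finset.mem_univ b, h⟩
    have : (S a ∪ S b).card = (S a).card + (S b).card :=
      Finset.card_union_of_disjoint hdisj
    have := Finset.card_le_card hsub
    have ha := hcard a
    have hb := hcard b
    omega
end

section
/- Let H be a vertex-minimal finite simple graph with θ(H) ≤ 8 and χ'_s(H) > 20. Then H contains no triangle whose three vertices are all 4-vertices each having exactly two 3-neighbors. -/
open SimpleGraph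

variable {V : Type*}

/-- 4(C)-vertex: degree 4 with exactly two neighbors of degree 3. -/
def Is4C [Fintype V] (H : SimpleGraph V) [DecidableRel H.Adj] (x : V) : Prop :=
  H.degree x = 4 ∧ {y | H.Adj x y ∧ H.degree y = 3}.ncard = 2

lemma edgeSees_symm {G : SimpleGraph V} {e e' : Sym2 V} (h : EdgeSees G e e') :
    EdgeSees G e' e := by
  obtain ⟨hne, p, hp, q, hq, hpq⟩ := h
  exact ⟨hne.symm, q, hq, p, hp, hpq.imp Eq.symm (fun h => h.symm)⟩

lemma delV_adj {G : SimpleGraph V} {v a b : V} :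
    (DelV G v).Adj a b ↔ G.Adj a b ∧ a ≠ v ∧ b ≠ v := Iff.rfl

lemma mem_delV_edgeSet {G : SimpleGraph V} {v : V} {e : Sym2 V} :
    e ∈ (DelV G v).edgeSet ↔ e ∈ G.edgeSet ∧ v ∉ e := by
  induction e using Sym2.ind with
  | _ a b =>
    simp only [SimpleGraph.mem_edgeSet, delV_adj, Sym2.mem_iff]
    constructor
    · rintro ⟨h, ha, hb⟩
      exact ⟨h, by rintro (rfl|rfl) <;> simp_all⟩
    · rintro ⟨h, hv⟩
      push_neg at hv
      exact ⟨h, Ne.symm hv.1, Ne.symm hv.2⟩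

lemma not_mem_of_delV_edge {G : SimpleGraph V} {v : V} {e : Sym2 V}
    (h : e ∈ (DelV G v).edgeSet) : v ∉ e := (mem_delV_edgeSet.mp h).2

lemma neighborFinset_delV [Fintype V] [DecidableEq V] {G : SimpleGraph V} {v u : V}
    [DecidableRel G.Adj] [DecidableRel (DelV G v).Adj] (huv : u ≠ v) :
    (DelV G v).neighborFinset u = (G.neighborFinset u).erase v := by
  ext w
  simp only [mem_neighborFinset, delV_adj, Finset.mem_erase]
  constructor
  · rintro ⟨h, _, hw⟩; exact ⟨hw, h⟩
  · rintro ⟨hw, h⟩; exact ⟨h, huv, hw⟩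

lemma degree_delV_le [Fintype V] [DecidableEq V] {G : SimpleGraph V} {v u : V}
    [DecidableRel G.Adj] [DecidableRel (DelV G v).Adj] :
    (DelV G v).degree u ≤ G.degree u := by
  classical
  by_cases huv : u = v
  · have h0 : (DelV G v).neighborFinset u = ∅ := by
      ext w; simp [mem_neighborFinset, delV_adj, huv]
    unfold SimpleGraph.degree
    rw [h0]
    simp
  · unfold SimpleGraph.degree
    rw [neighborFinset_delV huv]
    exact Finset.card_le_card (Finset.erase_subset _ _)

lemma degree_delV_of_adj [Fintype V] [DecidableEq V] {G : SimpleGraph V} {v u : V}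
    [DecidableRel G.Adj] [DecidableRel (DelV G v).Adj] (h : G.Adj v u) :
    (DelV G v).degree u = G.degree u - 1 := by
  classical
  unfold SimpleGraph.degree
  rw [neighborFinset_delV h.ne',
    Finset.card_erase_of_mem (by rwa [mem_neighborFinset, adj_comm])]

lemma is4C_nbhd [Fintype V] [DecidableEq V] {H : SimpleGraph V} [DecidableRel H.Adj]
    {u v1 v2 : V} (h : Is4C H u) (h1 : H.Adj u v1) (h2 : H.Adj u v2) (hne : v1 ≠ v2)
    (hd1 : H.degree v1 = 4) (hd2 : H.degree v2 = 4) :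
    ∃ z1 z2, z1 ≠ z2 ∧ H.degree z1 = 3 ∧ H.degree z2 = 3 ∧
      H.neighborFinset u = {v1, v2, z1, z2} := by
  classical
  obtain ⟨hdeg, hcard⟩ := h
  obtain ⟨z1, z2, hz12, hzS⟩ := Set.ncard_eq_two.mp hcard
  have hz1 : H.Adj u z1 ∧ H.degree z1 = 3 := by
    have : z1 ∈ ({z1, z2} : Set V) := by simp
    rw [← hzS] at this; exact this
  have hz2 : H.Adj u z2 ∧ H.degree z2 = 3 := by
    have : z2 ∈ ({z1, z2} : Set V) := by simp
    rw [← hzS] at this; exact this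
  refine ⟨z1, z2, hz12, hz1.2, hz2.2, ?_⟩
  have hsub : ({v1, v2, z1, z2} : Finset V) ⊆ H.neighborFinset u := by
    intro w hw
    simp only [Finset.mem_insert, Finset.mem_singleton] at hw
    rw [mem_neighborFinset]
    rcases hw with rfl|rfl|rfl|rfl
    exacts [h1, h2, hz1.1, hz2.1]
  have hv1z1 : v1 ≠ z1 := fun h => by rw [h, hz1.2] at hd1; omega
  have hv1z2 : v1 ≠ z2 := fun h => by rw [h, hz2.2] at hd1; omega
  have hv2z1 : v2 ≠ z1 := fun h => by rw [h, hz1.2] at hd2; omega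
  have hv2z2 : v2 ≠ z2 := fun h => by rw [h, hz2.2] at hd2; omega
  have hc : ({v1, v2, z1, z2} : Finset V).card = 4 := by
    rw [Finset.card_insert_of_notMem (by simp [hne, hv1z1, hv1z2]),
      Finset.card_insert_of_notMem (by simp [hv2z1, hv2z2]),
      Finset.card_insert_of_notMem (by simp [hz12]), Finset.card_singleton]
  exact (Finset.eq_of_subset_of_card_le hsub (by
    rw [hc]; exact le_of_eq hdeg)).symm

lemma exists_notMem_fin20 (s : Finset (Fin 20)) (h : s.card ≤ 19) : ∃ c, c ∉ s := by
  by_contra hc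
  push_neg at hc
  have : (Finset.univ : Finset (Fin 20)) ⊆ s := fun x _ => hc x
  have := Finset.card_le_card this
  simp at this
  omega

lemma mem_incFinset [Fintype V] [DecidableEq V] {G : SimpleGraph V} [DecidableRel G.Adj]
    {v : V} {e : Sym2 V} : e ∈ G.incidenceFinset v ↔ e ∈ G.edgeSet ∧ v ∈ e := by
  rw [SimpleGraph.mem_incidenceFinset]
  exact Iff.rfl

lemma card_conf_ab [Fintype V] [DecidableEq V] {H G : SimpleGraph V} {a t c z z' y1 y2 : V}
    [DecidableRel H.Adj] [DecidableRel G.Adj]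
    [DecidablePred (EdgeSees H s(a, t))]
    (hGE : ∀ e ∈ G.edgeSet, a ∉ e)
    (haN : H.neighborFinset a = {t, c, z, z'})
    (htN : H.neighborFinset t = {a, c, y1, y2})
    (hdt : G.degree t ≤ 3) (hdc : G.degree c ≤ 3)
    (hdz : G.degree z ≤ 2) (hdz' : G.degree z' ≤ 2)
    (hdy1 : G.degree y1 ≤ 3) (hdy2 : G.degree y2 ≤ 3) :
    (G.edgeFinset.filter (fun e' => EdgeSees H s(a, t) e')).card ≤ 16 := by
  have key : G.edgeFinset.filter (fun e' => EdgeSees H s(a, t) e') ⊆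
      G.incidenceFinset t ∪ G.incidenceFinset c ∪ G.incidenceFinset z ∪
      G.incidenceFinset z' ∪ G.incidenceFinset y1 ∪ G.incidenceFinset y2 := by
    intro e' he'
    rw [Finset.mem_filter, SimpleGraph.mem_edgeFinset] at he'
    obtain ⟨heG, hne, p, hp, q, hq, hor⟩ := he'
    have haq : a ∉ e' := hGE e' heG
    have hq_ne_a : q ≠ a := fun h => haq (h ▸ hq)
    have bucket : (q = t ∨ q = c ∨ q = z ∨ q = z' ∨ q = y1 ∨ q = y2) →
        e' ∈ G.incidenceFinset t ∪ G.incidenceFinset c ∪ G.incidenceFinset z ∪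
        G.incidenceFinset z' ∪ G.incidenceFinset y1 ∪ G.incidenceFinset y2 := by
      intro hcase
      simp only [Finset.mem_union, mem_incFinset]
      rcases hcase with rfl|rfl|rfl|rfl|rfl|rfl
      · exact Or.inl <| Or.inl <| Or.inl <| Or.inl <| Or.inl ⟨heG, hq⟩
      · exact Or.inl <| Or.inl <| Or.inl <| Or.inl <| Or.inr ⟨heG, hq⟩
      · exact Or.inl <| Or.inl <| Or.inl <| Or.inr ⟨heG, hq⟩
      · exact Or.inl <| Or.inl <| Or.inr ⟨heG, hq⟩
      · exact Or.inl <| Or.inr ⟨heG, hq⟩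
      · exact Or.inr ⟨heG, hq⟩
    rw [Sym2.mem_iff] at hp
    rcases hp with rfl|rfl
    · rcases hor with heq|hadj
      · exact absurd heq.symm hq_ne_a
      · have hqN : q ∈ H.neighborFinset p := by rwa [mem_neighborFinset]
        rw [haN] at hqN
        simp only [Finset.mem_insert, Finset.mem_singleton] at hqN
        exact bucket (by tauto)
    · rcases hor with heq|hadj
      · exact bucket (Or.inl heq.symm)
      · have hqN : q ∈ H.neighborFinset p := by rwa [mem_neighborFinset]
        rw [htN] at hqN
        simp only [Finset.mem_insert, Finset.mem_singleton] at hqN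
        rcases hqN with rfl|h2|h2|h2
        · exact absurd rfl hq_ne_a
        · exact bucket (by tauto)
        · exact bucket (by tauto)
        · exact bucket (by tauto)
  have hcard := Finset.card_le_card key
  have u1 := Finset.card_union_le (G.incidenceFinset t ∪ G.incidenceFinset c ∪
    G.incidenceFinset z ∪ G.incidenceFinset z' ∪ G.incidenceFinset y1) (G.incidenceFinset y2)
  have u2 := Finset.card_union_le (G.incidenceFinset t ∪ G.incidenceFinset c ∪
    G.incidenceFinset z ∪ G.incidenceFinset z') (G.incidenceFinset y1)
  have u3 := Finset.card_union_le (G.incidenceFinset t ∪ G.incidenceFinset c ∪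
    G.incidenceFinset z) (G.incidenceFinset z')
  have u4 := Finset.card_union_le (G.incidenceFinset t ∪ G.incidenceFinset c)
    (G.incidenceFinset z)
  have u5 := Finset.card_union_le (G.incidenceFinset t) (G.incidenceFinset c)
  have e1 : (G.incidenceFinset t).card = G.degree t := G.card_incidenceFinset_eq_degree t
  have e2 : (G.incidenceFinset c).card = G.degree c := G.card_incidenceFinset_eq_degree c
  have e3 : (G.incidenceFinset z).card = G.degree z := G.card_incidenceFinset_eq_degree z
  have e4 : (G.incidenceFinset z').card = G.degree z' := G.card_incidenceFinset_eq_degree z'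
  have e5 : (G.incidenceFinset y1).card = G.degree y1 := G.card_incidenceFinset_eq_degree y1
  have e6 : (G.incidenceFinset y2).card = G.degree y2 := G.card_incidenceFinset_eq_degree y2
  omega

lemma card_conf_ax [Fintype V] [DecidableEq V] {H G : SimpleGraph V} {a t c z z' : V}
    [DecidableRel H.Adj] [DecidableRel G.Adj]
    [DecidablePred (EdgeSees H s(a, z))]
    (hGE : ∀ e ∈ G.edgeSet, a ∉ e)
    (hGadj : ∀ u w, G.Adj u w ↔ (H.Adj u w ∧ u ≠ a ∧ w ≠ a))
    (haz : H.Adj a z)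
    (haN : H.neighborFinset a = {t, c, z, z'})
    (hdt : G.degree t ≤ 3) (hdc : G.degree c ≤ 3)
    (hdz : G.degree z = 2) (hdz' : G.degree z' ≤ 2)
    (hw : ∀ w, G.Adj z w → G.degree w ≤ 5) :
    (G.edgeFinset.filter (fun e' => EdgeSees H s(a, z) e')).card ≤ 18 := by
  set B : Finset (Sym2 V) :=
    (G.neighborFinset z).biUnion (fun w => G.incidenceFinset w \ {s(z, w)}) with hB
  have key : G.edgeFinset.filter (fun e' => EdgeSees H s(a, z) e') ⊆
      G.incidenceFinset t ∪ G.incidenceFinset c ∪ G.incidenceFinset z ∪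
      G.incidenceFinset z' ∪ B := by
    intro e' he'
    rw [Finset.mem_filter, SimpleGraph.mem_edgeFinset] at he'
    obtain ⟨heG, hne, p, hp, q, hq, hor⟩ := he'
    have haq : a ∉ e' := hGE e' heG
    have hq_ne_a : q ≠ a := fun h => haq (h ▸ hq)
    have bucket : (q = t ∨ q = c ∨ q = z ∨ q = z') →
        e' ∈ G.incidenceFinset t ∪ G.incidenceFinset c ∪ G.incidenceFinset z ∪
        G.incidenceFinset z' ∪ B := by
      intro hcase
      simp only [Finset.mem_union, mem_incFinset]
      rcases hcase with rfl|rfl|rfl|rfl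
      · exact Or.inl <| Or.inl <| Or.inl <| Or.inl ⟨heG, hq⟩
      · exact Or.inl <| Or.inl <| Or.inl <| Or.inr ⟨heG, hq⟩
      · exact Or.inl <| Or.inl <| Or.inr ⟨heG, hq⟩
      · exact Or.inl <| Or.inr ⟨heG, hq⟩
    rw [Sym2.mem_iff] at hp
    rcases hp with rfl|rfl
    · rcases hor with heq|hadj
      · exact absurd heq.symm hq_ne_a
      · have hqN : q ∈ H.neighborFinset p := by rwa [mem_neighborFinset]
        rw [haN] at hqN
        simp only [Finset.mem_insert, Finset.mem_singleton] at hqN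
        exact bucket (by tauto)
    · rcases hor with heq|hadj
      · exact bucket (by tauto)
      · by_cases hz : p ∈ e'
        · simp only [Finset.mem_union, mem_incFinset]
          exact Or.inl <| Or.inl <| Or.inr ⟨heG, hz⟩
        · have hGzq : G.Adj p q := (hGadj p q).mpr ⟨hadj, haz.ne', hq_ne_a⟩
          have : e' ∈ B := by
            rw [hB, Finset.mem_biUnion]
            refine ⟨q, by rwa [mem_neighborFinset], ?_⟩
            rw [Finset.mem_sdiff, mem_incFinset, Finset.mem_singleton]
            refine ⟨⟨heG, hq⟩, fun h => hz ?_⟩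
            rw [h]
            exact Sym2.mem_mk_left _ _
          simp only [Finset.mem_union]
          tauto
  have hcard := Finset.card_le_card key
  have hBcard : B.card ≤ 8 := by
    have h1 : B.card ≤ ∑ w ∈ G.neighborFinset z, (G.incidenceFinset w \ {s(z, w)}).card :=
      Finset.card_biUnion_le
    have h2 : ∀ w ∈ G.neighborFinset z, (G.incidenceFinset w \ {s(z, w)}).card ≤ 4 := by
      intro w hwN
      rw [mem_neighborFinset] at hwN
      have hsub : ({s(z, w)} : Finset (Sym2 V)) ⊆ G.incidenceFinset w := by
        intro x hx
        rw [Finset.mem_singleton] at hx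
        rw [hx, mem_incFinset]
        exact ⟨hwN, Sym2.mem_mk_right _ _⟩
      rw [Finset.card_sdiff_of_subset hsub, Finset.card_singleton,
        G.card_incidenceFinset_eq_degree w]
      have := hw w hwN
      omega
    have h3 : ∑ w ∈ G.neighborFinset z, (G.incidenceFinset w \ {s(z, w)}).card ≤
        (G.neighborFinset z).card * 4 := by
      calc ∑ w ∈ G.neighborFinset z, (G.incidenceFinset w \ {s(z, w)}).card
          ≤ ∑ _w ∈ G.neighborFinset z, 4 := Finset.sum_le_sum h2
        _ = (G.neighborFinset z).card * 4 := by rw [Finset.sum_const, smul_eq_mul]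
    have h4 : (G.neighborFinset z).card = 2 := hdz
    omega
  have u1 := Finset.card_union_le (G.incidenceFinset t ∪ G.incidenceFinset c ∪
    G.incidenceFinset z ∪ G.incidenceFinset z') B
  have u3 := Finset.card_union_le (G.incidenceFinset t ∪ G.incidenceFinset c ∪
    G.incidenceFinset z) (G.incidenceFinset z')
  have u4 := Finset.card_union_le (G.incidenceFinset t ∪ G.incidenceFinset c)
    (G.incidenceFinset z)
  have u5 := Finset.card_union_le (G.incidenceFinset t) (G.incidenceFinset c)
  have e1 : (G.incidenceFinset t).card = G.degree t := G.card_incidenceFinset_eq_degree t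
  have e2 : (G.incidenceFinset c).card = G.degree c := G.card_incidenceFinset_eq_degree c
  have e3 : (G.incidenceFinset z).card = G.degree z := G.card_incidenceFinset_eq_degree z
  have e4 : (G.incidenceFinset z').card = G.degree z' := G.card_incidenceFinset_eq_degree z'
  omega

/-- θ ≤ 8, χ'ₛ > 20: no triangle of three 4(C)-vertices. -/
theorem stmt15 [Fintype V] (H : SimpleGraph V) [DecidableRel H.Adj]
    (hore : ∀ u w, H.Adj u w → H.degree u + H.degree w ≤ 8)
    (hnc : ¬ HasStrongColoring H 20)
    (hmin : ∀ v, HasStrongColoring (DelV H v) 20) :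
    ¬ ∃ a b c : V, H.Adj a b ∧ H.Adj b c ∧ H.Adj a c ∧
      Is4C H a ∧ Is4C H b ∧ Is4C H c := by
  classical
  rintro ⟨a, b, c, hab, hbc, hac, h4a, h4b, h4c⟩
  have hda : H.degree a = 4 := h4a.1
  have hdb : H.degree b = 4 := h4b.1
  have hdc : H.degree c = 4 := h4c.1
  obtain ⟨x1, x2, hx12, hdx1, hdx2, haN⟩ := is4C_nbhd h4a hab hac hbc.ne hdb hdc
  obtain ⟨y1, y2, hy12, hdy1, hdy2, hbN⟩ := is4C_nbhd h4b hab.symm hbc hac.ne hda hdc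
  obtain ⟨w1, w2, hw12, hdw1, hdw2, hcN⟩ := is4C_nbhd h4c hac.symm hbc.symm hab.ne hda hdb
  -- adjacency of a with x1 x2
  have hax1 : H.Adj a x1 := by
    rw [← mem_neighborFinset, haN]; simp
  have hax2 : H.Adj a x2 := by
    rw [← mem_neighborFinset, haN]; simp
  -- distinctness
  have hx1b : x1 ≠ b := fun h => by rw [h, hdb] at hdx1; omega
  have hx1c : x1 ≠ c := fun h => by rw [h, hdc] at hdx1; omega
  have hx2b : x2 ≠ b := fun h => by rw [h, hdb] at hdx2; omega
  have hx2c : x2 ≠ c := fun h => by rw [h, hdc] at hdx2; omega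
  -- reordered neighborhoods
  have haN2 : H.neighborFinset a = {b, c, x2, x1} := by
    rw [haN]; ext w; simp; tauto
  have haN3 : H.neighborFinset a = {c, b, x1, x2} := by
    rw [haN]; ext w; simp; tauto
  -- DelV degrees
  have hGE : ∀ e ∈ (DelV H a).edgeSet, a ∉ e := fun e he => not_mem_of_delV_edge he
  have hGadj : ∀ u w, (DelV H a).Adj u w ↔ (H.Adj u w ∧ u ≠ a ∧ w ≠ a) := fun _ _ => Iff.rfl
  have hgb : (DelV H a).degree b ≤ 3 := by
    rw [degree_delV_of_adj hab, hdb]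
  have hgc : (DelV H a).degree c ≤ 3 := by
    rw [degree_delV_of_adj hac, hdc]
  have hgx1 : (DelV H a).degree x1 = 2 := by
    rw [degree_delV_of_adj hax1, hdx1]
  have hgx2 : (DelV H a).degree x2 = 2 := by
    rw [degree_delV_of_adj hax2, hdx2]
  have hgy1 : (DelV H a).degree y1 ≤ 3 := hdy1 ▸ degree_delV_le
  have hgy2 : (DelV H a).degree y2 ≤ 3 := hdy2 ▸ degree_delV_le
  have hgw1 : (DelV H a).degree w1 ≤ 3 := hdw1 ▸ degree_delV_le
  have hgw2 : (DelV H a).degree w2 ≤ 3 := hdw2 ▸ degree_delV_le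
  have hbig1 : ∀ w, (DelV H a).Adj x1 w → (DelV H a).degree w ≤ 5 := by
    intro w h
    have h8 := hore x1 w h.1
    rw [hdx1] at h8
    exact le_trans degree_delV_le (by omega)
  have hbig2 : ∀ w, (DelV H a).Adj x2 w → (DelV H a).degree w ≤ 5 := by
    intro w h
    have h8 := hore x2 w h.1
    rw [hdx2] at h8
    exact le_trans degree_delV_le (by omega)
  -- conflict-set cardinality bounds
  have hC1 : ((DelV H a).edgeFinset.filter (fun e' => EdgeSees H s(a, x1) e')).card ≤ 18 :=
    card_conf_ax hGE hGadj hax1 haN hgb hgc hgx1 (le_of_eq hgx2) hbig1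
  have hC2 : ((DelV H a).edgeFinset.filter (fun e' => EdgeSees H s(a, x2) e')).card ≤ 18 :=
    card_conf_ax hGE hGadj hax2 haN2 hgb hgc hgx2 (le_of_eq hgx1) hbig2
  have hC3 : ((DelV H a).edgeFinset.filter (fun e' => EdgeSees H s(a, b) e')).card ≤ 16 :=
    card_conf_ab hGE haN hbN hgb hgc (le_of_eq hgx1) (le_of_eq hgx2) hgy1 hgy2
  have hC4 : ((DelV H a).edgeFinset.filter (fun e' => EdgeSees H s(a, c) e')).card ≤ 16 :=
    card_conf_ab hGE haN3 hcN hgc hgb (le_of_eq hgx1) (le_of_eq hgx2) hgw1 hgw2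
  -- the coloring of H - a
  obtain ⟨f, hf⟩ := hmin a
  set fObj : Sym2 V → Fin 20 :=
    fun e => if h : e ∈ (DelV H a).edgeSet then f ⟨e, h⟩ else 0 with hfObj
  -- choose the four new colors
  obtain ⟨c1, hc1⟩ := exists_notMem_fin20
    (((DelV H a).edgeFinset.filter (fun e' => EdgeSees H s(a, x1) e')).image fObj)
    (le_trans Finset.card_image_le (by omega))
  obtain ⟨c2, hc2⟩ := exists_notMem_fin20
    ((((DelV H a).edgeFinset.filter (fun e' => EdgeSees H s(a, x2) e')).image fObj) ∪ {c1})
    (le_trans (Finset.card_union_le _ _)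
      (by have := Finset.card_image_le (s := ((DelV H a).edgeFinset.filter
        (fun e' => EdgeSees H s(a, x2) e'))) (f := fObj); simp; omega))
  obtain ⟨c3, hc3⟩ := exists_notMem_fin20
    ((((DelV H a).edgeFinset.filter (fun e' => EdgeSees H s(a, b) e')).image fObj) ∪ {c1, c2})
    (le_trans (Finset.card_union_le _ _)
      (by
        have h1 := Finset.card_image_le (s := ((DelV H a).edgeFinset.filter
          (fun e' => EdgeSees H s(a, b) e'))) (f := fObj)
        have h2 : ({c1, c2} : Finset (Fin 20)).card ≤ 2 :=
          le_trans (Finset.card_insert_le _ _) (by simp)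
        omega))
  obtain ⟨c4, hc4⟩ := exists_notMem_fin20
    ((((DelV H a).edgeFinset.filter (fun e' => EdgeSees H s(a, c) e')).image fObj) ∪ {c1, c2, c3})
    (le_trans (Finset.card_union_le _ _)
      (by
        have h1 := Finset.card_image_le (s := ((DelV H a).edgeFinset.filter
          (fun e' => EdgeSees H s(a, c) e'))) (f := fObj)
        have h2 : ({c1, c2, c3} : Finset (Fin 20)).card ≤ 3 := by
          apply le_trans (Finset.card_insert_le _ _)
          have h3 := Finset.card_insert_le c2 ({c3} : Finset (Fin 20))
          have h4 : ({c3} : Finset (Fin 20)).card = 1 := Finset.card_singleton _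
          omega
        omega))
  -- pairwise distinct colors
  have hne21 : c2 ≠ c1 := fun h => hc2 (Finset.mem_union_right _ (by simp [h]))
  have hne31 : c3 ≠ c1 := fun h => hc3 (Finset.mem_union_right _ (by simp [h]))
  have hne32 : c3 ≠ c2 := fun h => hc3 (Finset.mem_union_right _ (by simp [h]))
  have hne41 : c4 ≠ c1 := fun h => hc4 (Finset.mem_union_right _ (by simp [h]))
  have hne42 : c4 ≠ c2 := fun h => hc4 (Finset.mem_union_right _ (by simp [h]))
  have hne43 : c4 ≠ c3 := fun h => hc4 (Finset.mem_union_right _ (by simp [h]))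
  -- color avoidance pointwise
  have hA1 : ∀ e', e' ∈ (DelV H a).edgeSet → EdgeSees H s(a, x1) e' → c1 ≠ fObj e' := by
    intro e' hm hs h
    exact hc1 (h ▸ Finset.mem_image_of_mem fObj
      (Finset.mem_filter.mpr ⟨SimpleGraph.mem_edgeFinset.mpr hm, hs⟩))
  have hA2 : ∀ e', e' ∈ (DelV H a).edgeSet → EdgeSees H s(a, x2) e' → c2 ≠ fObj e' := by
    intro e' hm hs h
    exact hc2 (Finset.mem_union_left _ (h ▸ Finset.mem_image_of_mem fObj
      (Finset.mem_filter.mpr ⟨SimpleGraph.mem_edgeFinset.mpr hm, hs⟩)))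
  have hA3 : ∀ e', e' ∈ (DelV H a).edgeSet → EdgeSees H s(a, b) e' → c3 ≠ fObj e' := by
    intro e' hm hs h
    exact hc3 (Finset.mem_union_left _ (h ▸ Finset.mem_image_of_mem fObj
      (Finset.mem_filter.mpr ⟨SimpleGraph.mem_edgeFinset.mpr hm, hs⟩)))
  have hA4 : ∀ e', e' ∈ (DelV H a).edgeSet → EdgeSees H s(a, c) e' → c4 ≠ fObj e' := by
    intro e' hm hs h
    exact hc4 (Finset.mem_union_left _ (h ▸ Finset.mem_image_of_mem fObj
      (Finset.mem_filter.mpr ⟨SimpleGraph.mem_edgeFinset.mpr hm, hs⟩)))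
  -- edge distinctness
  have hE12 : s(a, x1) ≠ s(a, x2) := fun h => hx12 (Sym2.congr_right.mp h)
  have hE13 : s(a, x1) ≠ s(a, b) := fun h => hx1b (Sym2.congr_right.mp h)
  have hE14 : s(a, x1) ≠ s(a, c) := fun h => hx1c (Sym2.congr_right.mp h)
  have hE23 : s(a, x2) ≠ s(a, b) := fun h => hx2b (Sym2.congr_right.mp h)
  have hE24 : s(a, x2) ≠ s(a, c) := fun h => hx2c (Sym2.congr_right.mp h)
  have hE34 : s(a, b) ≠ s(a, c) := fun h => hbc.ne (Sym2.congr_right.mp h)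
  -- the extended coloring
  set g : H.edgeSet → Fin 20 := fun e =>
    if e.val = s(a, x1) then c1
    else if e.val = s(a, x2) then c2
    else if e.val = s(a, b) then c3
    else if e.val = s(a, c) then c4
    else fObj e.val with hgdef
  -- classification of edges at a
  have hclass : ∀ e : H.edgeSet, a ∈ e.val →
      e.val = s(a, x1) ∨ e.val = s(a, x2) ∨ e.val = s(a, b) ∨ e.val = s(a, c) := by
    rintro ⟨e, he⟩ ha
    have main : ∀ r, H.Adj a r →
        (s(a, r) = s(a, x1) ∨ s(a, r) = s(a, x2) ∨ s(a, r) = s(a, b) ∨ s(a, r) = s(a, c)) := by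
      intro r hr
      have hrN : r ∈ H.neighborFinset a := by rwa [mem_neighborFinset]
      rw [haN] at hrN
      simp only [Finset.mem_insert, Finset.mem_singleton] at hrN
      rcases hrN with rfl|rfl|rfl|rfl
      · right; right; left; rfl
      · right; right; right; rfl
      · left; rfl
      · right; left; rfl
    induction e using Sym2.ind with
    | _ p q =>
      rw [SimpleGraph.mem_edgeSet] at he
      rw [Sym2.mem_iff] at ha
      rcases ha with rfl|rfl
      · exact main q he
      · have h2 : s(p, a) = s(a, p) := Sym2.eq_swap
        simp only [h2]
        exact main p he.symm
  -- g values
  have hg1 : ∀ e : H.edgeSet, e.val = s(a, x1) → g e = c1 := by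
    intro e he
    simp only [hgdef]
    rw [if_pos he]
  have hg2 : ∀ e : H.edgeSet, e.val = s(a, x2) → g e = c2 := by
    intro e he
    simp only [hgdef]
    rw [if_neg (fun hh => hE12 (he.symm.trans hh).symm), if_pos he]
  have hg3 : ∀ e : H.edgeSet, e.val = s(a, b) → g e = c3 := by
    intro e he
    simp only [hgdef]
    rw [if_neg (fun hh => hE13 (he.symm.trans hh).symm),
      if_neg (fun hh => hE23 (he.symm.trans hh).symm), if_pos he]
  have hg4 : ∀ e : H.edgeSet, e.val = s(a, c) → g e = c4 := by
    intro e he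
    simp only [hgdef]
    rw [if_neg (fun hh => hE14 (he.symm.trans hh).symm),
      if_neg (fun hh => hE24 (he.symm.trans hh).symm),
      if_neg (fun hh => hE34 (he.symm.trans hh).symm), if_pos he]
  have hold_mem : ∀ e : H.edgeSet, a ∉ e.val → e.val ∈ (DelV H a).edgeSet :=
    fun e he => mem_delV_edgeSet.mpr ⟨e.2, he⟩
  have hgold : ∀ e : H.edgeSet, a ∉ e.val → g e = fObj e.val := by
    intro e he
    simp only [hgdef]
    rw [if_neg (fun hh => he (by rw [hh]; exact Sym2.mem_mk_left a x1)),
      if_neg (fun hh => he (by rw [hh]; exact Sym2.mem_mk_left a x2)),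
      if_neg (fun hh => he (by rw [hh]; exact Sym2.mem_mk_left a b)),
      if_neg (fun hh => he (by rw [hh]; exact Sym2.mem_mk_left a c))]
  -- key: new edge vs old edge
  have key : ∀ e e' : H.edgeSet, a ∈ e.val → a ∉ e'.val →
      EdgeSees H e.val e'.val → g e ≠ g e' := by
    intro e e' he he' hsee
    have hm' : e'.val ∈ (DelV H a).edgeSet := hold_mem e' he'
    rw [hgold e' he']
    rcases hclass e he with h|h|h|h
    · rw [hg1 e h]; exact hA1 e'.val hm' (h ▸ hsee)
    · rw [hg2 e h]; exact hA2 e'.val hm' (h ▸ hsee)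
    · rw [hg3 e h]; exact hA3 e'.val hm' (h ▸ hsee)
    · rw [hg4 e h]; exact hA4 e'.val hm' (h ▸ hsee)
  -- the contradiction
  apply hnc
  refine ⟨g, ?_⟩
  intro e e' hsee
  by_cases he : a ∈ e.val <;> by_cases he' : a ∈ e'.val
  · -- both new
    rcases hclass e he with h|h|h|h <;> rcases hclass e' he' with h'|h'|h'|h'
    · exact absurd (h.trans h'.symm) hsee.1
    · rw [hg1 e h, hg2 e' h']; exact hne21.symm
    · rw [hg1 e h, hg3 e' h']; exact hne31.symm
    · rw [hg1 e h, hg4 e' h']; exact hne41.symm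
    · rw [hg2 e h, hg1 e' h']; exact hne21
    · exact absurd (h.trans h'.symm) hsee.1
    · rw [hg2 e h, hg3 e' h']; exact hne32.symm
    · rw [hg2 e h, hg4 e' h']; exact hne42.symm
    · rw [hg3 e h, hg1 e' h']; exact hne31
    · rw [hg3 e h, hg2 e' h']; exact hne32
    · exact absurd (h.trans h'.symm) hsee.1
    · rw [hg3 e h, hg4 e' h']; exact hne43.symm
    · rw [hg4 e h, hg1 e' h']; exact hne41
    · rw [hg4 e h, hg2 e' h']; exact hne42
    · rw [hg4 e h, hg3 e' h']; exact hne43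
    · exact absurd (h.trans h'.symm) hsee.1
  · exact key e e' he he' hsee
  · exact (key e' e he' he (edgeSees_symm hsee)).symm
  · -- both old
    have hm : e.val ∈ (DelV H a).edgeSet := hold_mem e he
    have hm' : e'.val ∈ (DelV H a).edgeSet := hold_mem e' he'
    rw [hgold e he, hgold e' he']
    have hfe : fObj e.val = f ⟨e.val, hm⟩ := by rw [hfObj]; exact dif_pos hm
    have hfe' : fObj e'.val = f ⟨e'.val, hm'⟩ := by rw [hfObj]; exact dif_pos hm'
    rw [hfe, hfe']
    apply hf
    obtain ⟨hne, p, hp, q, hq, hor⟩ := hsee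
    refine ⟨hne, p, hp, q, hq, hor.imp id (fun hadj => ?_)⟩
    exact ⟨hadj, fun h => (hGE e.val hm) (h ▸ hp), fun h => (hGE e'.val hm') (h ▸ hq)⟩
end

section
/- Let H be a vertex-minimal finite simple graph with θ(H) ≤ 8 and χ'_s(H) > 20. Then H contains no 4-cycle x₁x₂x₃x₄ in which x₁ is a 3-vertex and x₂, x₃, x₄ are 4-vertices each with exactly two 3-neighbors. -/
open SimpleGraph

variable {V : Type*}

lemma exists_fresh (F : Finset (Fin 20)) (h : F.card < 20) : ∃ c, c ∉ F := by
  by_contra hc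
  push_neg at hc
  have : F = Finset.univ := Finset.eq_univ_iff_forall.2 hc
  simp [this] at h

section Helpers
variable [Fintype V]

lemma card_inc_erase [DecidableEq V] (H : SimpleGraph V) [DecidableRel H.Adj] {a v : V}
    (hadj : H.Adj a v) :
    ((H.incidenceFinset v).erase s(a, v)).card = H.degree v - 1 := by
  rw [Finset.card_erase_of_mem, card_incidenceFinset_eq_degree]
  rw [mem_incidenceFinset, mk'_mem_incidenceSet_iff]
  exact ⟨hadj, Or.inr rfl⟩

lemma mem_inc_iff [DecidableEq V] (H : SimpleGraph V) [DecidableRel H.Adj] {v : V}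
    {e : Sym2 V} : e ∈ H.incidenceFinset v ↔ e ∈ H.edgeSet ∧ v ∈ e := by
  rw [mem_incidenceFinset]; rfl

-- the pair extraction lemma
lemma extract_pair (H : SimpleGraph V) [DecidableRel H.Adj]
    (hore : ∀ u w, H.Adj u w → H.degree u + H.degree w ≤ 8)
    {x p q : V} (hdx : H.degree x = 4)
    (ht : {y | H.Adj x y ∧ H.degree y = 3}.ncard = 2)
    (hxp : H.Adj x p) (hxq : H.Adj x q) (hpq : p ≠ q)
    (hdp : H.degree p = 3) (hdq : H.degree q = 4) :
    ∃ α β : V, H.Adj x α ∧ H.Adj x β ∧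
      (∀ y, H.Adj x y → y = p ∨ y = q ∨ y = α ∨ y = β) ∧
      H.degree α + H.degree β ≤ 7 := by
  classical
  set N := H.neighborFinset x with hN
  have hpN : p ∈ N := (mem_neighborFinset _ _ _).2 hxp
  have hqN : q ∈ N := (mem_neighborFinset _ _ _).2 hxq
  have hcardN : N.card = 4 := hdx
  have hq' : q ∈ N.erase p := Finset.mem_erase.2 ⟨hpq.symm, hqN⟩
  have hR : ((N.erase p).erase q).card = 2 := by
    rw [Finset.card_erase_of_mem hq', Finset.card_erase_of_mem hpN, hcardN]
  obtain ⟨α, β, hab, hRe⟩ := Finset.card_eq_two.1 hR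
  have hαR : α ∈ (N.erase p).erase q := by rw [hRe]; simp
  have hβR : β ∈ (N.erase p).erase q := by rw [hRe]; simp
  have hxα : H.Adj x α := by
    have := (Finset.mem_erase.1 (Finset.mem_erase.1 hαR).2).2
    exact (mem_neighborFinset _ _ _).1 this
  have hxβ : H.Adj x β := by
    have := (Finset.mem_erase.1 (Finset.mem_erase.1 hβR).2).2
    exact (mem_neighborFinset _ _ _).1 this
  have hcover : ∀ y, H.Adj x y → y = p ∨ y = q ∨ y = α ∨ y = β := by
    intro y hy
    by_cases h1 : y = p; · exact Or.inl h1
    by_cases h2 : y = q; · exact Or.inr (Or.inl h2)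
    have : y ∈ (N.erase p).erase q :=
      Finset.mem_erase.2 ⟨h2, Finset.mem_erase.2 ⟨h1, (mem_neighborFinset _ _ _).2 hy⟩⟩
    rw [hRe] at this
    rcases Finset.mem_insert.1 this with h | h
    · exact Or.inr (Or.inr (Or.inl h))
    · exact Or.inr (Or.inr (Or.inr (Finset.mem_singleton.1 h)))
  -- degree counting
  set T := N.filter (fun y => H.degree y = 3) with hT
  have hTcard : T.card = 2 := by
    have hco : {y | H.Adj x y ∧ H.degree y = 3} = (↑T : Set V) := by
      ext y; simp [hT, hN, Finset.mem_filter, mem_neighborFinset]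
    rw [hco, Set.ncard_coe_finset] at ht
    exact ht
  have hpT : p ∈ T := Finset.mem_filter.2 ⟨hpN, hdp⟩
  have hT1 : (T.erase p).card = 1 := by rw [Finset.card_erase_of_mem hpT, hTcard]
  obtain ⟨y₀, hy₀⟩ := Finset.card_eq_one.1 hT1
  have hy₀T : y₀ ∈ T.erase p := by rw [hy₀]; simp
  have hy₀p : y₀ ≠ p := (Finset.mem_erase.1 hy₀T).1
  have hy₀T' : y₀ ∈ T := (Finset.mem_erase.1 hy₀T).2
  have hy₀d : H.degree y₀ = 3 := (Finset.mem_filter.1 hy₀T').2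
  have hy₀N : y₀ ∈ N := (Finset.mem_filter.1 hy₀T').1
  have hy₀q : y₀ ≠ q := by intro h; rw [h, hdq] at hy₀d; omega
  have hy₀ab : y₀ = α ∨ y₀ = β := by
    have : y₀ ∈ (N.erase p).erase q :=
      Finset.mem_erase.2 ⟨hy₀q, Finset.mem_erase.2 ⟨hy₀p, hy₀N⟩⟩
    rw [hRe] at this
    simpa using this
  have hdα4 : H.degree α ≤ 4 := by have := hore x α hxα; omega
  have hdβ4 : H.degree β ≤ 4 := by have := hore x β hxβ; omega
  refine ⟨α, β, hxα, hxβ, hcover, ?_⟩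
  rcases hy₀ab with rfl | rfl
  · omega
  · omega

end Helpers

/-- θ ≤ 8, χ'ₛ > 20: no 4-cycle x₁x₂x₃x₄ with x₁ a 3-vertex and x₂,x₃,x₄
4(C)-vertices. -/
theorem stmt16 [Fintype V] (H : SimpleGraph V) [DecidableRel H.Adj]
    (hore : ∀ u w, H.Adj u w → H.degree u + H.degree w ≤ 8)
    (hnc : ¬ HasStrongColoring H 20)
    (hmin : ∀ v, HasStrongColoring (DelV H v) 20) :
    ¬ ∃ x₁ x₂ x₃ x₄ : V, H.Adj x₁ x₂ ∧ H.Adj x₂ x₃ ∧ H.Adj x₃ x₄ ∧ H.Adj x₄ x₁ ∧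
      x₁ ≠ x₃ ∧ x₂ ≠ x₄ ∧ H.degree x₁ = 3 ∧ Is4C H x₂ ∧ Is4C H x₃ ∧ Is4C H x₄ := by
  rintro ⟨x₁, x₂, x₃, x₄, h12, h23, h34, h41, h13, h24, hd1, ⟨hd2, ht2⟩, ⟨hd3, ht3⟩, ⟨hd4, ht4⟩⟩
  classical
  apply hnc
  obtain ⟨g, hg⟩ := hmin x₁
  have h14 : H.Adj x₁ x₄ := h41.symm
  -- third neighbor w of x₁
  have hx2N : x₂ ∈ H.neighborFinset x₁ := (mem_neighborFinset _ _ _).2 h12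
  have hx4N : x₄ ∈ H.neighborFinset x₁ := (mem_neighborFinset _ _ _).2 h14
  have hcN1 : (H.neighborFinset x₁).card = 3 := hd1
  have hx4' : x₄ ∈ (H.neighborFinset x₁).erase x₂ := Finset.mem_erase.2 ⟨h24.symm, hx4N⟩
  have h1c : (((H.neighborFinset x₁).erase x₂).erase x₄).card = 1 := by
    rw [Finset.card_erase_of_mem hx4', Finset.card_erase_of_mem hx2N, hcN1]
  obtain ⟨w, hw⟩ := Finset.card_eq_one.1 h1c
  have hwR : w ∈ ((H.neighborFinset x₁).erase x₂).erase x₄ := by rw [hw]; simp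
  have hwx4 : w ≠ x₄ := (Finset.mem_erase.1 hwR).1
  have hwx2 : w ≠ x₂ := (Finset.mem_erase.1 (Finset.mem_erase.1 hwR).2).1
  have h1w : H.Adj x₁ w :=
    (mem_neighborFinset _ _ _).1 (Finset.mem_erase.1 (Finset.mem_erase.1 hwR).2).2
  have hN1cover : ∀ y, H.Adj x₁ y → y = x₂ ∨ y = x₄ ∨ y = w := by
    intro y hy
    by_cases e1 : y = x₂; · exact Or.inl e1
    by_cases e2 : y = x₄; · exact Or.inr (Or.inl e2)
    have : y ∈ ((H.neighborFinset x₁).erase x₂).erase x₄ :=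
      Finset.mem_erase.2 ⟨e2, Finset.mem_erase.2 ⟨e1, (mem_neighborFinset _ _ _).2 hy⟩⟩
    rw [hw] at this
    exact Or.inr (Or.inr (Finset.mem_singleton.1 this))
  have hdw : H.degree w ≤ 5 := by have := hore x₁ w h1w; omega
  have degpos : ∀ {a b : V}, H.Adj a b → 1 ≤ H.degree b := by
    intro a b h
    rw [← card_neighborFinset_eq_degree]
    exact Finset.card_pos.2 ⟨a, (mem_neighborFinset _ _ _).2 h.symm⟩
  -- neighbor pairs of x₂ and x₄
  obtain ⟨α, β, h2α, h2β, hcov2, hsum2⟩ :=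
    extract_pair H hore hd2 ht2 h12.symm h23 h13 hd1 hd3
  obtain ⟨γ, δ, h4γ, h4δ, hcov4, hsum4⟩ :=
    extract_pair H hore hd4 ht4 h41 h34.symm h13 hd1 hd3
  -- abbreviations
  set E2 : V → V → Finset (Sym2 V) := fun c v => (H.incidenceFinset v).erase s(c, v) with hE2
  set J3 : Finset (Sym2 V) := ((H.incidenceFinset x₃).erase s(x₂, x₃)).erase s(x₃, x₄) with hJ3
  set Csym : Sym2 V → Finset (Sym2 V) :=
    fun e => H.edgeFinset.filter (fun e' => x₁ ∉ e' ∧ EdgeSees H e e') with hCsymdef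
  have cardE2' : ∀ {c v : V}, H.Adj c v → (E2 c v).card = H.degree v - 1 := by
    intro c v h; rw [hE2]; exact card_inc_erase H h
  have memE2 : ∀ (c v : V) (e' : Sym2 V), e' ∈ H.edgeFinset → c ∉ e' → v ∈ e' → e' ∈ E2 c v := by
    intro c v e' he hc hv
    rw [hE2]
    refine Finset.mem_erase.2 ⟨fun h => hc ?_, (mem_inc_iff H).2 ⟨mem_edgeFinset.1 he, hv⟩⟩
    rw [h]; exact Sym2.mem_mk_left c v
  have memJ3 : ∀ (e' : Sym2 V), e' ∈ H.edgeFinset → x₂ ∉ e' → x₄ ∉ e' → x₃ ∈ e' → e' ∈ J3 := by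
    intro e' he h2 h4 h3
    rw [hJ3]
    refine Finset.mem_erase.2 ⟨fun h => h4 ?_, Finset.mem_erase.2 ⟨fun h => h2 ?_,
      (mem_inc_iff H).2 ⟨mem_edgeFinset.1 he, h3⟩⟩⟩
    · rw [h]; exact Sym2.mem_mk_right x₃ x₄
    · rw [h]; exact Sym2.mem_mk_left x₂ x₃
  have cardJ3 : J3.card = 2 := by
    have hm1 : s(x₂, x₃) ∈ H.incidenceFinset x₃ :=
      (mem_inc_iff H).2 ⟨h23, Sym2.mem_mk_right _ _⟩
    have hm2 : s(x₃, x₄) ∈ (H.incidenceFinset x₃).erase s(x₂, x₃) := by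
      refine Finset.mem_erase.2 ⟨?_, (mem_inc_iff H).2 ⟨h34, Sym2.mem_mk_left _ _⟩⟩
      intro hEq
      rw [Sym2.eq_iff] at hEq
      rcases hEq with ⟨h, -⟩ | ⟨-, h⟩
      · exact h23.ne' h
      · exact h24 h.symm
    rw [hJ3, Finset.card_erase_of_mem hm2, Finset.card_erase_of_mem hm1,
      card_incidenceFinset_eq_degree, hd3]
  -- endpoint analysis
  have endpt : ∀ (t : V) (e' : Sym2 V), e' ∈ Csym s(x₁, t) →
      e' ∈ H.edgeFinset ∧ x₁ ∉ e' ∧ ∃ b ∈ e', H.Adj x₁ b ∨ b = t ∨ H.Adj t b := by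
    intro t e' he'
    rw [hCsymdef, Finset.mem_filter] at he'
    obtain ⟨heH, hx1, hne, a, ha, b, hb, hab⟩ :
        e' ∈ H.edgeFinset ∧ x₁ ∉ e' ∧ EdgeSees H s(x₁, t) e' := he'
    refine ⟨heH, hx1, b, hb, ?_⟩
    rcases Sym2.mem_iff.1 ha with rfl | rfl
    · rcases hab with rfl | h
      · exact absurd hb hx1
      · exact Or.inl h
    · rcases hab with rfl | h
      · exact Or.inr (Or.inl rfl)
      · exact Or.inr (Or.inr h)
  -- coverage lemmas
  have cover2 : Csym s(x₁, x₂) ⊆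
      ((((E2 x₁ x₂ ∪ E2 x₁ x₄) ∪ E2 x₁ w) ∪ J3) ∪ E2 x₂ α) ∪ E2 x₂ β := by
    intro e' he'
    obtain ⟨heH, hx1, b, hb, hbc⟩ := endpt x₂ e' he'
    simp only [Finset.mem_union]
    by_cases m2 : x₂ ∈ e'
    · exact Or.inl (Or.inl (Or.inl (Or.inl (Or.inl (memE2 x₁ x₂ e' heH hx1 m2)))))
    by_cases m4 : x₄ ∈ e'
    · exact Or.inl (Or.inl (Or.inl (Or.inl (Or.inr (memE2 x₁ x₄ e' heH hx1 m4)))))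
    by_cases mw : w ∈ e'
    · exact Or.inl (Or.inl (Or.inl (Or.inr (memE2 x₁ w e' heH hx1 mw))))
    rcases hbc with h | rfl | h
    · rcases hN1cover b h with rfl | rfl | rfl
      · exact absurd hb m2
      · exact absurd hb m4
      · exact absurd hb mw
    · exact absurd hb m2
    · rcases hcov2 b h with rfl | rfl | rfl | rfl
      · exact absurd hb hx1
      · exact Or.inl (Or.inl (Or.inr (memJ3 e' heH m2 m4 hb)))
      · exact Or.inl (Or.inr (memE2 x₂ b e' heH m2 hb))
      · exact Or.inr (memE2 x₂ b e' heH m2 hb)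
  have cover4 : Csym s(x₁, x₄) ⊆
      ((((E2 x₁ x₂ ∪ E2 x₁ x₄) ∪ E2 x₁ w) ∪ J3) ∪ E2 x₄ γ) ∪ E2 x₄ δ := by
    intro e' he'
    obtain ⟨heH, hx1, b, hb, hbc⟩ := endpt x₄ e' he'
    simp only [Finset.mem_union]
    by_cases m2 : x₂ ∈ e'
    · exact Or.inl (Or.inl (Or.inl (Or.inl (Or.inl (memE2 x₁ x₂ e' heH hx1 m2)))))
    by_cases m4 : x₄ ∈ e'
    · exact Or.inl (Or.inl (Or.inl (Or.inl (Or.inr (memE2 x₁ x₄ e' heH hx1 m4)))))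
    by_cases mw : w ∈ e'
    · exact Or.inl (Or.inl (Or.inl (Or.inr (memE2 x₁ w e' heH hx1 mw))))
    rcases hbc with h | rfl | h
    · rcases hN1cover b h with rfl | rfl | rfl
      · exact absurd hb m2
      · exact absurd hb m4
      · exact absurd hb mw
    · exact absurd hb m4
    · rcases hcov4 b h with rfl | rfl | rfl | rfl
      · exact absurd hb hx1
      · exact Or.inl (Or.inl (Or.inr (memJ3 e' heH m2 m4 hb)))
      · exact Or.inl (Or.inr (memE2 x₄ b e' heH m4 hb))
      · exact Or.inr (memE2 x₄ b e' heH m4 hb)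
  have coverw : Csym s(x₁, w) ⊆
      ((E2 x₁ x₂ ∪ E2 x₁ x₄) ∪ E2 x₁ w) ∪
        ((H.neighborFinset w).erase x₁).biUnion (fun u => E2 w u) := by
    intro e' he'
    obtain ⟨heH, hx1, b, hb, hbc⟩ := endpt w e' he'
    simp only [Finset.mem_union]
    by_cases m2 : x₂ ∈ e'
    · exact Or.inl (Or.inl (Or.inl (memE2 x₁ x₂ e' heH hx1 m2)))
    by_cases m4 : x₄ ∈ e'
    · exact Or.inl (Or.inl (Or.inr (memE2 x₁ x₄ e' heH hx1 m4)))
    by_cases mw : w ∈ e'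
    · exact Or.inl (Or.inr (memE2 x₁ w e' heH hx1 mw))
    rcases hbc with h | rfl | h
    · rcases hN1cover b h with rfl | rfl | rfl
      · exact absurd hb m2
      · exact absurd hb m4
      · exact absurd hb mw
    · exact absurd hb mw
    · refine Or.inr (Finset.mem_biUnion.2 ⟨b, Finset.mem_erase.2
        ⟨fun hbe => hx1 (hbe ▸ hb), (mem_neighborFinset _ _ _).2 h⟩,
        memE2 w b e' heH mw hb⟩)
  -- cardinality bounds
  have card2 : (Csym s(x₁, x₂)).card ≤ 17 := by
    have h0 := Finset.card_le_card cover2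
    have u1 := Finset.card_union_le (E2 x₁ x₂) (E2 x₁ x₄)
    have u2 := Finset.card_union_le (E2 x₁ x₂ ∪ E2 x₁ x₄) (E2 x₁ w)
    have u3 := Finset.card_union_le ((E2 x₁ x₂ ∪ E2 x₁ x₄) ∪ E2 x₁ w) J3
    have u4 := Finset.card_union_le (((E2 x₁ x₂ ∪ E2 x₁ x₄) ∪ E2 x₁ w) ∪ J3) (E2 x₂ α)
    have u5 := Finset.card_union_le ((((E2 x₁ x₂ ∪ E2 x₁ x₄) ∪ E2 x₁ w) ∪ J3) ∪ E2 x₂ α)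
      (E2 x₂ β)
    have e1 : (E2 x₁ x₂).card = H.degree x₂ - 1 := cardE2' h12
    have e2 : (E2 x₁ x₄).card = H.degree x₄ - 1 := cardE2' h14
    have e3 : (E2 x₁ w).card = H.degree w - 1 := cardE2' h1w
    have e4 : (E2 x₂ α).card = H.degree α - 1 := cardE2' h2α
    have e5 : (E2 x₂ β).card = H.degree β - 1 := cardE2' h2β
    have p1 := degpos h2α
    have p2 := degpos h2β
    omega
  have card4 : (Csym s(x₁, x₄)).card ≤ 17 := by
    have h0 := Finset.card_le_card cover4
    have u1 := Finset.card_union_le (E2 x₁ x₂) (E2 x₁ x₄)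
    have u2 := Finset.card_union_le (E2 x₁ x₂ ∪ E2 x₁ x₄) (E2 x₁ w)
    have u3 := Finset.card_union_le ((E2 x₁ x₂ ∪ E2 x₁ x₄) ∪ E2 x₁ w) J3
    have u4 := Finset.card_union_le (((E2 x₁ x₂ ∪ E2 x₁ x₄) ∪ E2 x₁ w) ∪ J3) (E2 x₄ γ)
    have u5 := Finset.card_union_le ((((E2 x₁ x₂ ∪ E2 x₁ x₄) ∪ E2 x₁ w) ∪ J3) ∪ E2 x₄ γ)
      (E2 x₄ δ)
    have e1 : (E2 x₁ x₂).card = H.degree x₂ - 1 := cardE2' h12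
    have e2 : (E2 x₁ x₄).card = H.degree x₄ - 1 := cardE2' h14
    have e3 : (E2 x₁ w).card = H.degree w - 1 := cardE2' h1w
    have e4 : (E2 x₄ γ).card = H.degree γ - 1 := cardE2' h4γ
    have e5 : (E2 x₄ δ).card = H.degree δ - 1 := cardE2' h4δ
    have p1 := degpos h4γ
    have p2 := degpos h4δ
    omega
  have cardw : (Csym s(x₁, w)).card ≤ 18 := by
    have h0 := Finset.card_le_card coverw
    have u1 := Finset.card_union_le (E2 x₁ x₂) (E2 x₁ x₄)
    have u2 := Finset.card_union_le (E2 x₁ x₂ ∪ E2 x₁ x₄) (E2 x₁ w)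
    have u3 := Finset.card_union_le ((E2 x₁ x₂ ∪ E2 x₁ x₄) ∪ E2 x₁ w)
      (((H.neighborFinset w).erase x₁).biUnion (fun u => E2 w u))
    have ub := Finset.card_biUnion_le (s := (H.neighborFinset w).erase x₁)
      (t := fun u => E2 w u)
    have hsum : ∑ u ∈ (H.neighborFinset w).erase x₁, (E2 w u).card ≤
        ((H.neighborFinset w).erase x₁).card * (7 - H.degree w) := by
      have := Finset.sum_le_card_nsmul ((H.neighborFinset w).erase x₁)
        (fun u => (E2 w u).card) (7 - H.degree w) ?_
      · simpa [smul_eq_mul] using this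
      · intro u hu
        have hadj : H.Adj w u := (mem_neighborFinset _ _ _).1 (Finset.mem_erase.1 hu).2
        have hb := hore w u hadj
        show (E2 w u).card ≤ 7 - H.degree w
        rw [cardE2' hadj]
        omega
    have hUcard : ((H.neighborFinset w).erase x₁).card = H.degree w - 1 := by
      rw [Finset.card_erase_of_mem ((mem_neighborFinset _ _ _).2 h1w.symm)]
      rfl
    have e1 : (E2 x₁ x₂).card = H.degree x₂ - 1 := cardE2' h12
    have e2 : (E2 x₁ x₄).card = H.degree x₄ - 1 := cardE2' h14
    have e3 : (E2 x₁ w).card = H.degree w - 1 := cardE2' h1w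
    have hdw1 : 1 ≤ H.degree w := by
      rw [← card_neighborFinset_eq_degree]
      exact Finset.card_pos.2 ⟨x₁, (mem_neighborFinset _ _ _).2 h1w.symm⟩
    rw [hUcard] at hsum
    have hmul : (H.degree w - 1) + (H.degree w - 1) * (7 - H.degree w) ≤ 12 := by
      have h5 := hdw
      have h1' := hdw1
      set k := H.degree w with hk
      clear_value k
      interval_cases k <;> norm_num
    omega
  -- conflict edges are edges of D
  have CsymD : ∀ (e e' : Sym2 V), e' ∈ Csym e → e' ∈ (DelV H x₁).edgeSet := by
    intro e e' h
    rw [hCsymdef, Finset.mem_filter] at h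
    exact mem_delV_edgeSet.2 ⟨mem_edgeFinset.1 h.1, h.2.1⟩
  set F : Sym2 V → Finset (Fin 20) :=
    fun e => (Csym e).attach.image (fun e' => g ⟨e'.1, CsymD e e'.1 e'.2⟩) with hFdef
  have cardF : ∀ e, (F e).card ≤ (Csym e).card := by
    intro e
    rw [hFdef]
    exact le_trans Finset.card_image_le (le_of_eq Finset.card_attach)
  have memF : ∀ (e : Sym2 V) (E : (DelV H x₁).edgeSet), E.1 ∈ Csym e → g E ∈ F e := by
    intro e E hE
    rw [hFdef]
    exact Finset.mem_image.2 ⟨⟨E.1, hE⟩, Finset.mem_attach _ _, congrArg g (Subtype.ext rfl)⟩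
  -- pick the three colors
  obtain ⟨cw, hcw⟩ := exists_fresh (F s(x₁, w)) (by have := cardF s(x₁, w); omega)
  obtain ⟨c2, hc2⟩ := exists_fresh (insert cw (F s(x₁, x₂)))
    (by have h1 := Finset.card_insert_le cw (F s(x₁, x₂)); have := cardF s(x₁, x₂); omega)
  obtain ⟨c4, hc4⟩ := exists_fresh (insert cw (insert c2 (F s(x₁, x₄))))
    (by
      have h1 := Finset.card_insert_le cw (insert c2 (F s(x₁, x₄)))
      have h2 := Finset.card_insert_le c2 (F s(x₁, x₄))
      have := cardF s(x₁, x₄); omega)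
  have hc2F : c2 ∉ F s(x₁, x₂) := fun h => hc2 (Finset.mem_insert_of_mem h)
  have hc2w : c2 ≠ cw := fun h => hc2 (h ▸ Finset.mem_insert_self _ _)
  have hc4F : c4 ∉ F s(x₁, x₄) :=
    fun h => hc4 (Finset.mem_insert_of_mem (Finset.mem_insert_of_mem h))
  have hc4w : c4 ≠ cw := fun h => hc4 (h ▸ Finset.mem_insert_self _ _)
  have hc42 : c4 ≠ c2 :=
    fun h => hc4 (Finset.mem_insert_of_mem (h ▸ Finset.mem_insert_self _ _))
  -- the three new edges are pairwise distinct
  have hne_w2 : s(x₁, w) ≠ s(x₁, x₂) := by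
    intro hEq; rw [Sym2.eq_iff] at hEq
    rcases hEq with ⟨-, h⟩ | ⟨h, -⟩
    · exact hwx2 h
    · exact h12.ne h
  have hne_w4 : s(x₁, w) ≠ s(x₁, x₄) := by
    intro hEq; rw [Sym2.eq_iff] at hEq
    rcases hEq with ⟨-, h⟩ | ⟨h, -⟩
    · exact hwx4 h
    · exact h14.ne h
  have hne_24 : s(x₁, x₂) ≠ s(x₁, x₄) := by
    intro hEq; rw [Sym2.eq_iff] at hEq
    rcases hEq with ⟨-, h⟩ | ⟨h, -⟩
    · exact h24 h
    · exact h14.ne h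
  -- the extended coloring
  set f : H.edgeSet → Fin 20 := fun E =>
    if E.1 = s(x₁, w) then cw
    else if E.1 = s(x₁, x₂) then c2
    else if E.1 = s(x₁, x₄) then c4
    else if h : E.1 ∈ (DelV H x₁).edgeSet then g ⟨E.1, h⟩ else cw with hfdef
  have fval_w : ∀ (E : H.edgeSet), E.1 = s(x₁, w) → f E = cw := by
    intro E h; simp [hfdef, h]
  have fval_2 : ∀ (E : H.edgeSet), E.1 = s(x₁, x₂) → f E = c2 := by
    intro E h; simp [hfdef, h, Ne.symm hne_w2]
  have fval_4 : ∀ (E : H.edgeSet), E.1 = s(x₁, x₄) → f E = c4 := by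
    intro E h; simp [hfdef, h, Ne.symm hne_w4, Ne.symm hne_24]
  have fval_old : ∀ (E : H.edgeSet) (hD : E.1 ∈ (DelV H x₁).edgeSet), x₁ ∉ E.1 → f E = g ⟨E.1, hD⟩ := by
    intro E hD hx
    have n1 : E.1 ≠ s(x₁, w) := fun h => hx (by rw [h]; exact Sym2.mem_mk_left _ _)
    have n2 : E.1 ≠ s(x₁, x₂) := fun h => hx (by rw [h]; exact Sym2.mem_mk_left _ _)
    have n3 : E.1 ≠ s(x₁, x₄) := fun h => hx (by rw [h]; exact Sym2.mem_mk_left _ _)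
    rw [hfdef]
    simp only [if_neg n1, if_neg n2, if_neg n3, dif_pos hD]
  -- edges through x₁
  have edge_eq : ∀ (e : Sym2 V), e ∈ H.edgeSet → x₁ ∈ e → ∃ u, e = s(x₁, u) ∧ H.Adj x₁ u := by
    intro e
    induction e using Sym2.ind with
    | _ a b =>
      intro he hx
      rw [SimpleGraph.mem_edgeSet] at he
      simp only [Sym2.mem_iff] at hx
      rcases hx with rfl | rfl
      · exact ⟨b, rfl, he⟩
      · exact ⟨a, Sym2.eq_swap, he.symm⟩
  have memCsym : ∀ (t : V) (E' : H.edgeSet), x₁ ∉ E'.1 → EdgeSees H s(x₁, t) E'.1 →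
      E'.1 ∈ Csym s(x₁, t) := by
    intro t E' hx hsee
    simp only [hCsymdef]
    exact Finset.mem_filter.2 ⟨mem_edgeFinset.2 E'.2, hx, hsee⟩
  -- the key step: a new edge never shares a color with an edge it sees
  have key : ∀ (E E' : H.edgeSet), EdgeSees H E.1 E'.1 → x₁ ∈ E.1 → f E ≠ f E' := by
    intro E E' hsee hx
    obtain ⟨u, hu, hadj⟩ := edge_eq E.1 E.2 hx
    by_cases hx' : x₁ ∈ E'.1
    · obtain ⟨u', hu', hadj'⟩ := edge_eq E'.1 E'.2 hx'
      have hne : E.1 ≠ E'.1 := hsee.1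
      obtain h | h | h := hN1cover u hadj <;> rw [h] at hu <;>
        (obtain h' | h' | h' := hN1cover u' hadj' <;> rw [h'] at hu')
      · rw [hu, hu'] at hne; exact absurd rfl hne
      · rw [fval_2 E hu, fval_4 E' hu']; exact Ne.symm hc42
      · rw [fval_2 E hu, fval_w E' hu']; exact hc2w
      · rw [fval_4 E hu, fval_2 E' hu']; exact hc42
      · rw [hu, hu'] at hne; exact absurd rfl hne
      · rw [fval_4 E hu, fval_w E' hu']; exact hc4w
      · rw [fval_w E hu, fval_2 E' hu']; exact Ne.symm hc2w
      · rw [fval_w E hu, fval_4 E' hu']; exact Ne.symm hc4w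
      · rw [hu, hu'] at hne; exact absurd rfl hne
    · have hD' : E'.1 ∈ (DelV H x₁).edgeSet := mem_delV_edgeSet.2 ⟨E'.2, hx'⟩
      rw [fval_old E' hD' hx']
      obtain h | h | h := hN1cover u hadj <;> rw [h] at hu
      · rw [fval_2 E hu]
        have hm : g ⟨E'.1, hD'⟩ ∈ F s(x₁, x₂) := by
          refine memF _ _ (memCsym x₂ E' hx' ?_)
          rw [← hu]; exact hsee
        exact fun hEq => hc2F (hEq ▸ hm)
      · rw [fval_4 E hu]
        have hm : g ⟨E'.1, hD'⟩ ∈ F s(x₁, x₄) := by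
          refine memF _ _ (memCsym x₄ E' hx' ?_)
          rw [← hu]; exact hsee
        exact fun hEq => hc4F (hEq ▸ hm)
      · rw [fval_w E hu]
        have hm : g ⟨E'.1, hD'⟩ ∈ F s(x₁, w) := by
          refine memF _ _ (memCsym w E' hx' ?_)
          rw [← hu]; exact hsee
        exact fun hEq => hcw (hEq ▸ hm)
  -- assemble
  refine ⟨f, ?_⟩
  intro E E' hsee
  by_cases hx : x₁ ∈ E.1
  · exact key E E' hsee hx
  by_cases hx' : x₁ ∈ E'.1
  · exact (key E' E (edgeSees_symm hsee) hx').symm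
  · have hD : E.1 ∈ (DelV H x₁).edgeSet := mem_delV_edgeSet.2 ⟨E.2, hx⟩
    have hD' : E'.1 ∈ (DelV H x₁).edgeSet := mem_delV_edgeSet.2 ⟨E'.2, hx'⟩
    rw [fval_old E hD hx, fval_old E' hD' hx']
    apply hg
    obtain ⟨hne, a, ha, b, hb, hab⟩ := hsee
    refine ⟨hne, a, ha, b, hb, ?_⟩
    rcases hab with h | h
    · exact Or.inl h
    · exact Or.inr ⟨h, fun hh => hx (hh ▸ ha), fun hh => hx' (hh ▸ hb)⟩
end
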